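/- arXiv:0907.3066 — 7 statements merged into one kernel-verified Lean document; each statement's English description precedes it below -/
import Mathlib

section
/- Let k and m be positive integers and let r_1, ..., r_m be integers such that for every permutation σ of {1,...,m}, the m(m+1)/2 sums ∑_{l=i}^{j} r_{σ(l)} (1 ≤ i ≤ j ≤ m) are pairwise distinct. Then there exist infinitely many prime numbers p such that r_1, ..., r_m is an m-term permutation chain of kth power residue modulo p. -/
open Polynomial IntermediateField

lemma exists_prime_dvd_eval (F : Polynomial ℤ) (hF : 1 ≤ F.natDegree) (M : ℤ) (hM : M ≠ 0) :
    ∃ p : ℕ, p.Prime ∧ ¬((p : ℤ) ∣ M) ∧ ∃ n : ℤ, (p : ℤ) ∣ F.eval n := by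
  set c := F.eval 0 with hc0
  by_cases hc : c = 0
  · obtain ⟨p, hpM, hp⟩ := Nat.exists_infinite_primes (M.natAbs + 1)
    refine ⟨p, hp, ?_, p, ?_⟩
    · intro h
      have h1 : (p : ℤ) ≤ |M| := Int.le_of_dvd (abs_pos.mpr hM) ((dvd_abs _ _).mpr h)
      rw [Int.abs_eq_natAbs] at h1
      have : p ≤ M.natAbs := by exact_mod_cast h1
      omega
    · have h2 := Polynomial.sub_dvd_eval_sub (p : ℤ) 0 F
      simpa [← hc0, hc] using h2
  · set D := c * M with hD0
    have hD : D ≠ 0 := mul_ne_zero hc hM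
    set G := F.comp (C D * X) with hG0
    have hGeval : ∀ t : ℤ, G.eval t = F.eval (D * t) := by
      intro t; simp [hG0, Polynomial.eval_comp]
    have hGdeg : 1 ≤ G.natDegree := by
      rw [hG0, Polynomial.natDegree_comp, Polynomial.natDegree_C_mul_X D hD, mul_one]
      exact hF
    have hGne : ∀ v : ℤ, G - C v ≠ 0 := by
      intro v h
      have h1 : G = C v := sub_eq_zero.mp h
      rw [h1, Polynomial.natDegree_C] at hGdeg
      omega
    have hSfin : (⋃ v ∈ (Finset.Icc (-|c|) |c| : Finset ℤ),
        {t : ℤ | (G - C v).IsRoot t}).Finite :=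
      Set.Finite.biUnion (Finset.Icc (-|c|) |c|).finite_toSet
        (fun v _ => Polynomial.finite_setOf_isRoot (hGne v))
    obtain ⟨t, ht⟩ := hSfin.infinite_compl.nonempty
    have h1 : |c| < |G.eval t| := by
      by_contra hcon
      push_neg at hcon
      apply ht
      have hv : G.eval t ∈ ((Finset.Icc (-|c|) |c| : Finset ℤ) : Set ℤ) := by
        simp only [Finset.coe_Icc, Set.mem_Icc]
        constructor
        · linarith [neg_abs_le (G.eval t)]
        · linarith [le_abs_self (G.eval t)]
      exact Set.mem_biUnion hv (by simp [Polynomial.IsRoot])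
    have h2 : D * t ∣ G.eval t - c := by
      have := Polynomial.sub_dvd_eval_sub (D * t) 0 F
      simpa [← hc0, hGeval t] using this
    obtain ⟨w, hw⟩ := h2
    set u := 1 + M * t * w with hu0
    have hGu : G.eval t = c * u := by
      rw [hu0]
      rw [hD0] at hw
      linear_combination hw
    have hu2 : 1 < u.natAbs := by
      have hlt : |c| * 1 < |c| * |u| := by
        rw [← abs_mul, ← hGu, mul_one]; exact h1
      have h3 : 1 < |u| := lt_of_mul_lt_mul_left hlt (abs_nonneg c)
      rw [Int.abs_eq_natAbs] at h3
      exact_mod_cast h3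
    obtain ⟨p, hp, hpu⟩ := Nat.exists_prime_and_dvd (by omega : u.natAbs ≠ 1)
    have hpZ : Prime (p : ℤ) := Int.prime_iff_natAbs_prime.mpr (by simpa)
    have hpu' : (p : ℤ) ∣ u :=
      dvd_trans (by exact_mod_cast hpu) (Int.natAbs_dvd.mpr dvd_rfl)
    refine ⟨p, hp, ?_, D * t, ?_⟩
    · intro h
      have hone : (p : ℤ) ∣ 1 := by
        have h4 : (p : ℤ) ∣ M * t * w := Dvd.dvd.mul_right (h.mul_right t) w
        have h5 : (1 : ℤ) = u - M * t * w := by rw [hu0]; ring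
        rw [h5]; exact dvd_sub hpu' h4
      exact hpZ.not_unit (isUnit_of_dvd_one hone)
    · rw [← hGeval t, hGu]
      exact Dvd.dvd.mul_left hpu' c

lemma exists_poly_for_residues (k : ℕ) (hk : 0 < k) (T : Finset ℤ) :
    ∃ (F : Polynomial ℤ) (B : ℤ), 1 ≤ F.natDegree ∧ B ≠ 0 ∧
      ∀ p : ℕ, p.Prime → ¬((p : ℤ) ∣ B) → ∀ n : ℤ, (p : ℤ) ∣ F.eval n →
        ∀ a ∈ T, ∃ x : ℤ, (p : ℤ) ∣ x ^ k - a := by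
  classical
  set P : Polynomial ℚ := ∏ a ∈ T, (X ^ k - C (a : ℚ)) with hP0
  set L := P.SplittingField with hL0
  obtain ⟨θ, hθ⟩ := Field.exists_primitive_element ℚ L
  have hint : IsIntegral ℚ θ := IsIntegral.of_finite ℚ θ
  set f := minpoly ℚ θ with hf0
  have hf1 : 1 ≤ f.natDegree := minpoly.natDegree_pos hint
  -- every a in T has a k-th root in L
  have hroot : ∀ a : ℤ, a ∈ T → ∃ α : L, α ^ k = (a : L) := by
    intro a ha
    have hdvd : (X ^ k - C (a : ℚ)) ∣ P := Finset.dvd_prod_of_mem _ ha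
    have hPne : P ≠ 0 := by
      rw [hP0]
      apply Finset.prod_ne_zero_iff.mpr
      intro b _ h
      have hdd := Polynomial.natDegree_X_pow_sub_C (n := k) (r := (b : ℚ))
      rw [h] at hdd
      simp at hdd
      omega
    have hsp : Splits ((X ^ k - C (a : ℚ)).map (algebraMap ℚ L)) :=
      (SplittingField.splits P).of_dvd (Polynomial.map_ne_zero hPne) (Polynomial.map_dvd _ hdvd)
    have hdeg : (X ^ k - C (a : ℚ)).degree ≠ 0 := by
      rw [Polynomial.degree_X_pow_sub_C hk]
      exact_mod_cast hk.ne'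
    obtain ⟨α, hα⟩ := hsp.exists_eval_eq_zero (by rw [Polynomial.degree_map]; exact hdeg)
    refine ⟨α, ?_⟩
    rw [Polynomial.eval_map, Polynomial.eval₂_sub, Polynomial.eval₂_pow, Polynomial.eval₂_X,
      Polynomial.eval₂_C, map_intCast, sub_eq_zero] at hα
    exact hα
  -- every a in T : q with q(θ)^k = a, so f ∣ q^k - C a
  have hfdvd : ∀ a : ℤ, a ∈ T → ∃ q h : Polynomial ℚ,
      q ^ k - C (a : ℚ) = f * h := by
    intro a ha
    obtain ⟨α, hα⟩ := hroot a ha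
    have hmem : α ∈ ℚ⟮θ⟯ := by rw [hθ]; trivial
    have hmem2 : α ∈ Algebra.adjoin ℚ ({θ} : Set L) := by
      rw [← IntermediateField.adjoin_simple_toSubalgebra_of_isAlgebraic hint.isAlgebraic]
      exact hmem
    rw [Algebra.adjoin_singleton_eq_range_aeval] at hmem2
    obtain ⟨q, hq'⟩ := hmem2
    have hq : (Polynomial.aeval θ) q = α := hq'
    have hz : (Polynomial.aeval θ) (q ^ k - C (a : ℚ)) = 0 := by
      rw [map_sub, map_pow, hq, Polynomial.aeval_C, map_intCast, hα, sub_self]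
    obtain ⟨h, hh⟩ := minpoly.dvd ℚ θ hz
    exact ⟨q, h, hh⟩
  -- integer normalization of f
  obtain ⟨e, he⟩ := IsLocalization.integerNormalization_map_to_map (nonZeroDivisors ℤ) f
  set F : Polynomial ℤ := IsLocalization.integerNormalization (nonZeroDivisors ℤ) f with hF0
  have heZ : (e : ℤ) ≠ 0 := nonZeroDivisors.coe_ne_zero e
  have hFf : F.map (algebraMap ℤ ℚ) = (e : ℤ) • f := he
  have hsmulC : ∀ (d : ℤ) (q : Polynomial ℚ), d • q = C ((d : ℚ)) * q := by
    intro d q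
    rw [← Polynomial.smul_eq_C_mul]
    exact (Int.cast_smul_eq_zsmul ℚ d q).symm
  have hFdeg : 1 ≤ F.natDegree := by
    have h1 : F.natDegree = ((e : ℤ) • f).natDegree := by
      rw [← hFf, Polynomial.natDegree_map_eq_of_injective
        (f := algebraMap ℤ ℚ) (fun x y h => by exact_mod_cast h)]
    rw [h1, hsmulC, Polynomial.natDegree_C_mul (by exact_mod_cast heZ)]
    exact hf1
  -- evaluation of mapped polynomials
  have hev : ∀ (Q : Polynomial ℤ) (n : ℤ),
      (Q.map (algebraMap ℤ ℚ)).eval ((n : ℚ)) = ((Q.eval n : ℤ) : ℚ) := by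
    intro Q n
    rw [Polynomial.eval_map]
    exact Polynomial.eval₂_at_apply (algebraMap ℤ ℚ) n
  have hevF : ∀ n : ℤ, ((F.eval n : ℤ) : ℚ) = (e : ℤ) * f.eval (n : ℚ) := by
    intro n
    rw [← hev F n, hFf, hsmulC]
    simp
  -- integer versions of q and h per a
  have key2 : ∀ a : ℤ, a ∈ T → ∃ (d : ℤ) (Q : Polynomial ℤ) (c : ℤ) (H : Polynomial ℤ),
      d ≠ 0 ∧ c ≠ 0 ∧ ∀ n : ℤ,
        (Q.eval n) ^ k * ((e : ℤ) * c) - a * d ^ k * ((e : ℤ) * c)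
          = d ^ k * (F.eval n * H.eval n) := by
    intro a ha
    obtain ⟨q, h, hqh⟩ := hfdvd a ha
    obtain ⟨d', hd'⟩ := IsLocalization.integerNormalization_map_to_map (nonZeroDivisors ℤ) q
    obtain ⟨c', hc'⟩ := IsLocalization.integerNormalization_map_to_map (nonZeroDivisors ℤ) h
    refine ⟨(d' : ℤ), IsLocalization.integerNormalization (nonZeroDivisors ℤ) q,
      (c' : ℤ), IsLocalization.integerNormalization (nonZeroDivisors ℤ) h,
      nonZeroDivisors.coe_ne_zero d', nonZeroDivisors.coe_ne_zero c', ?_⟩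
    intro n
    have hdq : (((IsLocalization.integerNormalization (nonZeroDivisors ℤ) q).eval n : ℤ) : ℚ)
        = ((d' : ℤ) : ℚ) * q.eval (n : ℚ) := by
      rw [← hev _ n, hd', hsmulC]; simp
    have hch : (((IsLocalization.integerNormalization (nonZeroDivisors ℤ) h).eval n : ℤ) : ℚ)
        = ((c' : ℤ) : ℚ) * h.eval (n : ℚ) := by
      rw [← hev _ n, hc', hsmulC]; simp
    have hqa : (q.eval (n : ℚ)) ^ k - (a : ℚ) = f.eval (n : ℚ) * h.eval (n : ℚ) := by
      have := congrArg (fun z => Polynomial.eval ((n : ℚ)) z) hqh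
      simpa using this
    apply @Int.cast_injective ℚ
    push_cast
    rw [hdq, hevF n, hch]
    linear_combination
      (((d' : ℤ) : ℚ)) ^ k * ((e : ℤ) : ℚ) * (((c' : ℤ) : ℚ)) * hqa
  choose d Q c H hd hcne hkey using key2
  refine ⟨F, (e : ℤ) * ∏ a ∈ T.attach, (d a a.2 * c a a.2), hFdeg, ?_, ?_⟩
  · exact mul_ne_zero heZ (Finset.prod_ne_zero_iff.mpr
      (fun i _ => mul_ne_zero (hd i i.2) (hcne i i.2)))
  · intro p pp hpB n hpF a ha
    have hpZ : Prime (p : ℤ) := Int.prime_iff_natAbs_prime.mpr (by simpa)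
    have hterm : (d a ha * c a ha) ∣ ∏ b ∈ T.attach, (d b b.2 * c b b.2) :=
      Finset.dvd_prod_of_mem _ (Finset.mem_attach T ⟨a, ha⟩)
    have hpe : ¬ (p : ℤ) ∣ (e : ℤ) := fun hdvd => hpB (hdvd.mul_right _)
    have hpd : ¬ (p : ℤ) ∣ d a ha := fun hdvd =>
      hpB (Dvd.dvd.mul_left (dvd_trans (hdvd.mul_right _) hterm) _)
    have hpc : ¬ (p : ℤ) ∣ c a ha := fun hdvd =>
      hpB (Dvd.dvd.mul_left (dvd_trans (hdvd.mul_left _) hterm) _)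
    have hid := hkey a ha n
    have hdvd1 : (p : ℤ) ∣ ((Q a ha).eval n ^ k - a * (d a ha) ^ k) * ((e : ℤ) * c a ha) := by
      have : ((Q a ha).eval n ^ k - a * (d a ha) ^ k) * ((e : ℤ) * c a ha)
          = (d a ha) ^ k * (F.eval n * (H a ha).eval n) := by linear_combination hid
      rw [this]
      exact Dvd.dvd.mul_left (hpF.mul_right _) _
    have hdvd2 : (p : ℤ) ∣ (Q a ha).eval n ^ k - a * (d a ha) ^ k := by
      rcases hpZ.dvd_mul.mp hdvd1 with h1 | h1
      · exact h1
      · rcases hpZ.dvd_mul.mp h1 with h2 | h2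
        · exact absurd h2 hpe
        · exact absurd h2 hpc
    haveI : Fact p.Prime := ⟨pp⟩
    have hd0 : ((d a ha : ℤ) : ZMod p) ≠ 0 := by
      rw [Ne, ZMod.intCast_zmod_eq_zero_iff_dvd]
      exact hpd
    have hQa : (((Q a ha).eval n : ℤ) : ZMod p) ^ k
        = (a : ZMod p) * ((d a ha : ℤ) : ZMod p) ^ k := by
      have h0 : (((Q a ha).eval n ^ k - a * (d a ha) ^ k : ℤ) : ZMod p) = 0 :=
        (ZMod.intCast_zmod_eq_zero_iff_dvd _ _).mpr hdvd2
      push_cast at h0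
      linear_combination h0
    set z : ZMod p := (((Q a ha).eval n : ℤ) : ZMod p) * (((d a ha : ℤ) : ZMod p))⁻¹ with hz0
    have hzk : z ^ k = (a : ZMod p) := by
      rw [hz0, mul_pow, hQa, mul_assoc, ← mul_pow, mul_inv_cancel₀ hd0, one_pow, mul_one]
    refine ⟨((z.val : ℕ) : ℤ), ?_⟩
    rw [← ZMod.intCast_zmod_eq_zero_iff_dvd]
    push_cast
    rw [ZMod.natCast_val, ZMod.cast_id, hzk, sub_self]

/-- `c` is a `k`th power residue modulo the ideal `P`: there is `x` with `x ^ k ≡ c (mod P)`. -/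
def IsKthPowerResidue {A : Type*} [CommRing A] (k : ℕ) (P : Ideal A) (c : A) : Prop :=
  ∃ x : A, x ^ k - c ∈ P

/-- `r 1, ..., r m` is an `m`-term permutation chain of `k`th power residue modulo `P`:
for every permutation `σ` of `{1, ..., m}`, the `m(m+1)/2` sums
`∑_{l=i}^{j} r (σ l)` (`i ≤ j`) are pairwise incongruent modulo `P` and
each is a `k`th power residue modulo `P`. -/
def IsPermutationChain {A : Type*} [CommRing A] (k : ℕ) {m : ℕ} (P : Ideal A)
    (r : Fin m → A) : Prop :=
  ∀ σ : Equiv.Perm (Fin m),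
    (∀ i j i' j' : Fin m, i ≤ j → i' ≤ j' → (i, j) ≠ (i', j') →
      (∑ l ∈ Finset.Icc i j, r (σ l)) - (∑ l ∈ Finset.Icc i' j', r (σ l)) ∉ P) ∧
    (∀ i j : Fin m, i ≤ j → IsKthPowerResidue k P (∑ l ∈ Finset.Icc i j, r (σ l)))

theorem kth_power_residue_permutation_chain_int (k m : ℕ) (hk : 0 < k) (hm : 0 < m)
    (r : Fin m → ℤ)
    (hr : ∀ σ : Equiv.Perm (Fin m), ∀ i j i' j' : Fin m, i ≤ j → i' ≤ j' →
      (i, j) ≠ (i', j') →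
      (∑ l ∈ Finset.Icc i j, r (σ l)) ≠ (∑ l ∈ Finset.Icc i' j', r (σ l))) :
    {p : ℕ | p.Prime ∧ IsPermutationChain k (Ideal.span {(p : ℤ)}) r}.Infinite := by
  classical
  set T : Finset ℤ := Finset.image
    (fun t : Equiv.Perm (Fin m) × Fin m × Fin m => ∑ l ∈ Finset.Icc t.2.1 t.2.2, r (t.1 l))
    Finset.univ with hT0
  obtain ⟨F, B, hFdeg, hB, hmain⟩ := exists_poly_for_residues k hk T
  set C₀ : ℕ := T.sup Int.natAbs with hC0
  have hTC : ∀ a ∈ T, a.natAbs ≤ C₀ := fun a ha => Finset.le_sup ha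
  apply Set.infinite_of_not_bddAbove
  rintro ⟨N, hN⟩
  have hM : (B * ((N + 2 * C₀ + 1).factorial : ℤ)) ≠ 0 :=
    mul_ne_zero hB (by exact_mod_cast (Nat.factorial_pos _).ne')
  obtain ⟨p, pp, hpM, n, hpF⟩ := exists_prime_dvd_eval F hFdeg _ hM
  have hpB : ¬ (p : ℤ) ∣ B := fun h => hpM (h.mul_right _)
  have hpbig : N + 2 * C₀ < p := by
    by_contra hcon
    push_neg at hcon
    have hdf : p ∣ (N + 2 * C₀ + 1).factorial := Nat.dvd_factorial pp.pos (by omega)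
    exact hpM (Dvd.dvd.mul_left (by exact_mod_cast hdf) B)
  have hmem : p ∈ {p : ℕ | p.Prime ∧ IsPermutationChain k (Ideal.span {(p : ℤ)}) r} := by
    refine ⟨pp, fun σ => ⟨?_, ?_⟩⟩
    · intro i j i' j' hij hij' hne hmemspan
      rw [Ideal.mem_span_singleton] at hmemspan
      have hS : (∑ l ∈ Finset.Icc i j, r (σ l)) ∈ T :=
        Finset.mem_image.mpr ⟨(σ, i, j), Finset.mem_univ _, rfl⟩
      have hS' : (∑ l ∈ Finset.Icc i' j', r (σ l)) ∈ T :=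
        Finset.mem_image.mpr ⟨(σ, i', j'), Finset.mem_univ _, rfl⟩
      have hne' : (∑ l ∈ Finset.Icc i j, r (σ l)) ≠ (∑ l ∈ Finset.Icc i' j', r (σ l)) :=
        hr σ i j i' j' hij hij' hne
      have h1 : (p : ℤ) ≤ |(∑ l ∈ Finset.Icc i j, r (σ l)) - (∑ l ∈ Finset.Icc i' j', r (σ l))| :=
        Int.le_of_dvd (abs_pos.mpr (sub_ne_zero.mpr hne')) ((dvd_abs _ _).mpr hmemspan)
      have hb1 : |∑ l ∈ Finset.Icc i j, r (σ l)| ≤ (C₀ : ℤ) := by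
        rw [Int.abs_eq_natAbs]; exact_mod_cast hTC _ hS
      have hb2 : |∑ l ∈ Finset.Icc i' j', r (σ l)| ≤ (C₀ : ℤ) := by
        rw [Int.abs_eq_natAbs]; exact_mod_cast hTC _ hS'
      have h2 : |(∑ l ∈ Finset.Icc i j, r (σ l)) - (∑ l ∈ Finset.Icc i' j', r (σ l))|
          ≤ 2 * (C₀ : ℤ) := by
        calc |(∑ l ∈ Finset.Icc i j, r (σ l)) - (∑ l ∈ Finset.Icc i' j', r (σ l))|
            ≤ |∑ l ∈ Finset.Icc i j, r (σ l)| + |∑ l ∈ Finset.Icc i' j', r (σ l)| := by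
              rw [sub_eq_add_neg]
              exact le_trans (abs_add_le _ _) (by rw [abs_neg])
          _ ≤ 2 * (C₀ : ℤ) := by linarith
      have h3 : (p : ℕ) ≤ 2 * C₀ := by exact_mod_cast le_trans h1 h2
      omega
    · intro i j hij
      have hS : (∑ l ∈ Finset.Icc i j, r (σ l)) ∈ T :=
        Finset.mem_image.mpr ⟨(σ, i, j), Finset.mem_univ _, rfl⟩
      obtain ⟨x, hx⟩ := hmain p pp hpB n hpF _ hS
      exact ⟨x, Ideal.mem_span_singleton.mpr hx⟩
  have := hN hmem
  omega
end

section
/- Let F_q be a finite field, and let A = F_q[T] be the polynomial ring in one variable over F_q. Let k and m be positive integers and let r_1, ..., r_m be polynomials in A such that for every permutation σ of {1,...,m}, the m(m+1)/2 sums ∑_{l=i}^{j} r_{σ(l)} (1 ≤ i ≤ j ≤ m) are pairwise distinct in A. Then the set of nonzero prime ideals P of A (equivalently, ideals generated by irreducible polynomials) for which r_1, ..., r_m is an m-term permutation chain of kth power residue modulo P is infinite. -/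
open Polynomial

lemma exists_identity {Fq : Type*} [Field Fq] (n : ℕ)
    (hchar : ((n+1 : ℕ) : Polynomial Fq) ≠ 0)
    (S : Finset (Polynomial Fq)) (hS : ∀ s ∈ S, s ≠ 0) :
    ∃ F : Polynomial (Polynomial Fq), 0 < F.natDegree ∧
      ∀ s ∈ S, ∃ (E : Polynomial Fq) (P Q : Polynomial (Polynomial Fq)),
        E ≠ 0 ∧ P ^ (n+1) - Polynomial.C (E ^ (n+1) * s) = F * Q := by
  classical
  set K := FractionRing (Polynomial Fq) with hK
  have hι : Function.Injective (algebraMap (Polynomial Fq) K) := IsFractionRing.injective _ _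
  have hKn : ((n+1 : ℕ) : K) ≠ 0 := by
    intro h
    apply hchar
    apply hι
    rw [map_natCast, map_zero, h]
  have hs0 : ∀ s ∈ S, algebraMap (Polynomial Fq) K s ≠ 0 := by
    intro s hs h
    exact hS s hs (hι (by rw [h, map_zero]))
  have hdummyΩ : True := trivial
  have hroot : ∀ s ∈ S, ∃ α : AlgebraicClosure K, α ^ (n+1) = algebraMap K (AlgebraicClosure K) (algebraMap (Polynomial Fq) K s) := by
    intro s hs
    obtain ⟨α, hα⟩ := IsAlgClosed.exists_root
      ((X : Polynomial (AlgebraicClosure K)) ^ (n+1) - C (algebraMap K (AlgebraicClosure K) (algebraMap (Polynomial Fq) K s)))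
      (by rw [Polynomial.degree_X_pow_sub_C (Nat.succ_pos n)]; exact_mod_cast Nat.succ_ne_zero n)
    refine ⟨α, ?_⟩
    have := hα
    simp only [Polynomial.IsRoot, Polynomial.eval_sub, Polynomial.eval_pow, Polynomial.eval_X,
      Polynomial.eval_C, sub_eq_zero] at this
    exact this
  choose α hα using hroot
  set T : Set (AlgebraicClosure K) := {x | ∃ s, ∃ hs : s ∈ S, x = α s hs} with hT
  have hTfin : T.Finite := by
    have hsub : T ⊆ ↑(S.attach.image (fun s => α s.1 s.2)) := by
      rintro x ⟨s, hs, rfl⟩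
      exact Finset.mem_coe.mpr (Finset.mem_image.mpr ⟨⟨s, hs⟩, Finset.mem_attach _ _, rfl⟩)
    exact (Finset.finite_toSet _).subset hsub
  haveI := hTfin.to_subtype
  have hint : ∀ x ∈ T, IsIntegral K x := by
    rintro x ⟨s, hs, rfl⟩
    refine ⟨X ^ (n+1) - C (algebraMap (Polynomial Fq) K s),
      Polynomial.monic_X_pow_sub_C _ (Nat.succ_ne_zero n), ?_⟩
    simp [hα s hs]
  have hsep : ∀ x ∈ T, IsSeparable K x := by
    rintro x ⟨s, hs, rfl⟩
    have hXsep : ((X : K[X]) ^ (n+1) - C (algebraMap (Polynomial Fq) K s)).Separable :=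
      Polynomial.separable_X_pow_sub_C _ hKn (hs0 s hs)
    exact hXsep.of_dvd (minpoly.dvd K _ (by simp [hα s hs]))
  set L := IntermediateField.adjoin K T with hL
  haveI : FiniteDimensional K L := IntermediateField.finiteDimensional_adjoin hint
  haveI : Algebra.IsSeparable K L :=
    (IntermediateField.isSeparable_adjoin_iff_isSeparable K (AlgebraicClosure K)).mpr hsep
  obtain ⟨γ, hγ⟩ := Field.exists_primitive_element K L
  have hγint : IsIntegral K γ := IsIntegral.of_finite K γ
  have hμdeg : 0 < (minpoly K γ).natDegree := minpoly.natDegree_pos hγint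
  obtain ⟨b₂, hb₂⟩ := IsLocalization.integerNormalization_map_to_map
    (nonZeroDivisors (Polynomial Fq)) (minpoly K γ)
  set F := IsLocalization.integerNormalization (nonZeroDivisors (Polynomial Fq)) (minpoly K γ)
    with hFdef
  have hb₂' : F.map (algebraMap (Polynomial Fq) K)
      = C (algebraMap (Polynomial Fq) K (b₂ : Polynomial Fq)) * minpoly K γ := by
    rw [hb₂, ← algebraMap_smul K ((b₂ : Polynomial Fq)) (minpoly K γ), Polynomial.smul_eq_C_mul]
  have hb₂0 : algebraMap (Polynomial Fq) K (b₂ : Polynomial Fq) ≠ 0 := by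
    intro h
    exact nonZeroDivisors.ne_zero b₂.2 (hι (by rw [h, map_zero]))
  have hFdeg : 0 < F.natDegree := by
    have h1 : (F.map (algebraMap (Polynomial Fq) K)).natDegree = F.natDegree :=
      Polynomial.natDegree_map_eq_of_injective hι F
    rw [← h1, hb₂', Polynomial.natDegree_C_mul hb₂0]
    exact hμdeg
  refine ⟨F, hFdeg, fun s hs => ?_⟩
  have hαT : α s hs ∈ T := ⟨s, hs, rfl⟩
  have hαL : α s hs ∈ L := IntermediateField.subset_adjoin K T hαT
  have hαLpow : (⟨α s hs, hαL⟩ : L) ^ (n+1) = algebraMap K L (algebraMap (Polynomial Fq) K s) := by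
    apply Subtype.ext
    push_cast
    rw [hα s hs]
  have hmem : (⟨α s hs, hαL⟩ : L) ∈ Algebra.adjoin K ({γ} : Set L) := by
    rw [← IntermediateField.adjoin_simple_toSubalgebra_of_isAlgebraic hγint.isAlgebraic,
      IntermediateField.mem_toSubalgebra, hγ]
    exact IntermediateField.mem_top
  rw [Algebra.adjoin_singleton_eq_range_aeval] at hmem
  obtain ⟨ps, hps⟩ := hmem
  have haev : (Polynomial.aeval γ) (ps ^ (n+1) - C (algebraMap (Polynomial Fq) K s)) = 0 := by
    have hps' : (Polynomial.aeval γ) ps = (⟨α s hs, hαL⟩ : L) := hps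
    rw [map_sub, map_pow, hps', aeval_C, hαLpow, sub_self]
  obtain ⟨qs, hq⟩ := minpoly.dvd K γ haev
  obtain ⟨b₁, hb₁⟩ := IsLocalization.integerNormalization_map_to_map
    (nonZeroDivisors (Polynomial Fq)) ps
  obtain ⟨b₃, hb₃⟩ := IsLocalization.integerNormalization_map_to_map
    (nonZeroDivisors (Polynomial Fq)) qs
  set P₁ := IsLocalization.integerNormalization (nonZeroDivisors (Polynomial Fq)) ps with hP₁def
  set Q₀ := IsLocalization.integerNormalization (nonZeroDivisors (Polynomial Fq)) qs with hQ₀def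
  have hb₁' : P₁.map (algebraMap (Polynomial Fq) K)
      = C (algebraMap (Polynomial Fq) K (b₁ : Polynomial Fq)) * ps := by
    rw [hb₁, ← algebraMap_smul K ((b₁ : Polynomial Fq)) ps, Polynomial.smul_eq_C_mul]
  have hb₃' : Q₀.map (algebraMap (Polynomial Fq) K)
      = C (algebraMap (Polynomial Fq) K (b₃ : Polynomial Fq)) * qs := by
    rw [hb₃, ← algebraMap_smul K ((b₃ : Polynomial Fq)) qs, Polynomial.smul_eq_C_mul]
  refine ⟨(b₁ : Polynomial Fq) * b₂ * b₃,
    C ((b₂ : Polynomial Fq) * (b₃ : Polynomial Fq)) * P₁,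
    C ((b₁ : Polynomial Fq) ^ (n+1) * (b₂ : Polynomial Fq) ^ n * (b₃ : Polynomial Fq) ^ n) * Q₀,
    ?_, ?_⟩
  · exact mul_ne_zero (mul_ne_zero (nonZeroDivisors.ne_zero b₁.2) (nonZeroDivisors.ne_zero b₂.2))
      (nonZeroDivisors.ne_zero b₃.2)
  · apply Polynomial.map_injective (algebraMap (Polynomial Fq) K) hι
    simp only [Polynomial.map_sub, Polynomial.map_pow, Polynomial.map_mul, Polynomial.map_C,
      hb₁', hb₂', hb₃', map_mul, map_pow, Polynomial.C_mul, Polynomial.C_pow]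
    linear_combination (C (algebraMap (Polynomial Fq) K (b₁ : Polynomial Fq)) *
      C (algebraMap (Polynomial Fq) K (b₂ : Polynomial Fq)) *
      C (algebraMap (Polynomial Fq) K (b₃ : Polynomial Fq))) ^ (n+1) * hq


lemma exists_good_prime {Fq : Type*} [Field Fq] [Fintype Fq]
    (F : Polynomial (Polynomial Fq)) (hF : 0 < F.natDegree)
    (M : Polynomial Fq) (hM : M ≠ 0) :
    ∃ (π a : Polynomial Fq), Irreducible π ∧ π ∣ F.eval a ∧ ¬ π ∣ M := by
  classical
  have hF0 : F ≠ 0 := fun h => by simp [h] at hF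
  obtain ⟨a₀, hc⟩ : ∃ a₀, F.eval a₀ ≠ 0 := by
    by_contra h
    push_neg at h
    exact hF0 (Polynomial.zero_of_eval_zero F h)
  set c := F.eval a₀ with hcdef
  set G := F.comp (C a₀ + C (c * M) * X) with hG
  have hGeval : ∀ u, G.eval u = F.eval (a₀ + c * M * u) := by
    intro u
    rw [hG, Polynomial.eval_comp]
    simp
  have hGdeg : 0 < G.natDegree := by
    rw [hG, Polynomial.natDegree_comp]
    have h1 : (C a₀ + C (c * M) * X).natDegree = 1 := by
      rw [add_comm]
      exact Polynomial.natDegree_linear (mul_ne_zero hc hM)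
    rw [h1, mul_one]
    exact hF
  set V : Set (Polynomial Fq) := Set.range (fun e : Fq => c * C e) with hV
  have hVfin : V.Finite := Set.finite_range _
  have hUfin : {u : Polynomial Fq | G.eval u ∈ V}.Finite := by
    have hsub : {u : Polynomial Fq | G.eval u ∈ V} ⊆ ⋃ v ∈ V, {u | G.eval u = v} := by
      intro u hu
      exact Set.mem_biUnion hu rfl
    refine Set.Finite.subset (hVfin.biUnion fun v hv => ?_) hsub
    have hGv : G - C v ≠ 0 := by
      intro h
      have h2 : G = C v := by
        have := sub_eq_zero.mp h
        exact this
      rw [h2] at hGdeg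
      simp at hGdeg
    refine (Polynomial.finite_setOf_isRoot hGv).subset ?_
    intro u hu
    simp only [Set.mem_setOf_eq] at hu ⊢
    simp [Polynomial.IsRoot, hu]
  obtain ⟨u, hu⟩ := (Set.Finite.infinite_compl hUfin).nonempty
  have huV : F.eval (a₀ + c * M * u) ∉ V := by
    rw [← hGeval]
    exact hu
  set a := a₀ + c * M * u with ha
  obtain ⟨w, hw⟩ : c * M * u ∣ F.eval a - c := by
    have h := Polynomial.sub_dvd_eval_sub a a₀ F
    have h2 : a - a₀ = c * M * u := by rw [ha]; ring
    rwa [h2] at h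
  set z := 1 + M * u * w with hz
  have hcz : F.eval a = c * z := by
    rw [hz]
    linear_combination hw
  have hznu : ¬ IsUnit z := by
    intro h
    obtain ⟨e, he, hce⟩ := Polynomial.isUnit_iff.mp h
    exact huV (by rw [hcz, ← hce]; exact ⟨e, rfl⟩)
  have hz0 : z ≠ 0 := by
    intro h
    apply huV
    rw [hcz, h, mul_zero]
    exact ⟨0, by simp⟩
  obtain ⟨π, hπ, hπz⟩ := WfDvdMonoid.exists_irreducible_factor hznu hz0
  refine ⟨π, a, hπ, ?_, ?_⟩
  · rw [hcz]
    exact hπz.mul_left c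
  · intro hdvd
    have h1 : π ∣ z - 1 := by
      rw [hz]
      simpa [mul_assoc] using hdvd.mul_right (u * w)
    have h2 : π ∣ 1 := by
      have := dvd_sub hπz h1
      simpa using this
    exact hπ.not_isUnit (isUnit_of_dvd_one h2)


set_option maxHeartbeats 1000000 in
theorem kth_power_residue_permutation_chain_polynomial (Fq : Type*) [Field Fq] [Fintype Fq]
    (k m : ℕ) (hk : 0 < k) (hm : 0 < m) (r : Fin m → Polynomial Fq)
    (hr : ∀ σ : Equiv.Perm (Fin m), ∀ i j i' j' : Fin m, i ≤ j → i' ≤ j' →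
      (i, j) ≠ (i', j') →
      (∑ l ∈ Finset.Icc i j, r (σ l)) ≠ (∑ l ∈ Finset.Icc i' j', r (σ l))) :
    {P : Ideal (Polynomial Fq) | P ≠ ⊥ ∧ P.IsPrime ∧ IsPermutationChain k P r}.Infinite := by
  classical
  set p := ringChar Fq with hpdef
  haveI : CharP Fq p := ringChar.charP Fq
  have hp : p.Prime := CharP.char_is_prime Fq p
  haveI : Fact p.Prime := ⟨hp⟩
  have hk0 : k ≠ 0 := hk.ne'
  have hkk : p ^ (k.factorization p) * (k / p ^ (k.factorization p)) = k :=
    Nat.ordProj_mul_ordCompl_eq_self k p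
  have hpk' : ¬ p ∣ (k / p ^ (k.factorization p)) := Nat.not_dvd_ordCompl hp hk0
  have hk'pos : 0 < k / p ^ (k.factorization p) := Nat.ordCompl_pos p hk0
  obtain ⟨n, hn⟩ : ∃ n, k / p ^ (k.factorization p) = n + 1 :=
    ⟨_, (Nat.succ_pred_eq_of_pos hk'pos).symm⟩
  have hchar : ((n+1 : ℕ) : Polynomial Fq) ≠ 0 := by
    rw [← hn, ← Polynomial.C_eq_natCast, Ne, Polynomial.C_eq_zero,
      CharP.cast_eq_zero_iff Fq p]
    exact hpk'
  set Ssums : Finset (Polynomial Fq) :=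
    (Finset.univ : Finset (Equiv.Perm (Fin m) × Fin m × Fin m)).image
      (fun x => ∑ l ∈ Finset.Icc x.2.1 x.2.2, r (x.1 l)) with hSsums
  set S := Ssums.filter (fun s => s ≠ 0) with hSdef
  obtain ⟨F, hFdeg, hFid⟩ := exists_identity n hchar S (fun s hs => (Finset.mem_filter.mp hs).2)
  choose E Ps Qs hEQ using hFid
  have hE : ∀ s (hs : s ∈ S), E s hs ≠ 0 := fun s hs => (hEQ s hs).1
  have hid : ∀ s (hs : s ∈ S),
      Ps s hs ^ (n+1) - Polynomial.C (E s hs ^ (n+1) * s) = F * Qs s hs :=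
    fun s hs => (hEQ s hs).2
  by_contra hinf
  rw [Set.not_infinite] at hinf
  have hgen : ∀ P ∈ hinf.toFinset, ∃ g : Polynomial Fq, g ≠ 0 ∧ Ideal.span {g} = P := by
    intro P hP
    rw [Set.Finite.mem_toFinset] at hP
    obtain ⟨hPbot, hPprime, -⟩ := hP
    refine ⟨Submodule.IsPrincipal.generator P, ?_, Ideal.span_singleton_generator P⟩
    intro h
    apply hPbot
    rw [← Ideal.span_singleton_generator P, h]
    simp
  choose g hg0 hgspan using hgen
  set Gp := ∏ P ∈ hinf.toFinset.attach, g P.1 P.2 with hGp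
  set Ep := ∏ s ∈ S.attach, E s.1 s.2 with hEp
  set Dfin : Finset (Polynomial Fq) :=
    ((Finset.univ : Finset (Equiv.Perm (Fin m) × (Fin m × Fin m) × (Fin m × Fin m))).filter
      (fun x => x.2.1.1 ≤ x.2.1.2 ∧ x.2.2.1 ≤ x.2.2.2 ∧ x.2.1 ≠ x.2.2)).image
      (fun x => (∑ l ∈ Finset.Icc x.2.1.1 x.2.1.2, r (x.1 l)) -
                 (∑ l ∈ Finset.Icc x.2.2.1 x.2.2.2, r (x.1 l))) with hDfin
  have hDne : ∀ d ∈ Dfin, d ≠ 0 := by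
    intro d hd
    obtain ⟨x, hx, rfl⟩ := Finset.mem_image.mp hd
    obtain ⟨-, h1, h2, h3⟩ := Finset.mem_filter.mp hx
    exact sub_ne_zero_of_ne
      (hr x.1 x.2.1.1 x.2.1.2 x.2.2.1 x.2.2.2 h1 h2 (by simpa using h3))
  set Dp := ∏ d ∈ Dfin, d with hDp
  have hMne : Ep * Dp * Gp ≠ 0 := by
    refine mul_ne_zero (mul_ne_zero ?_ ?_) ?_
    · exact Finset.prod_ne_zero_iff.mpr (fun s _ => hE s.1 s.2)
    · exact Finset.prod_ne_zero_iff.mpr (fun d hd => hDne d hd)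
    · exact Finset.prod_ne_zero_iff.mpr (fun P _ => hg0 P.1 P.2)
  obtain ⟨π, a, hπirr, hπF, hπM⟩ := exists_good_prime F hFdeg _ hMne
  have hπ0 : π ≠ 0 := hπirr.ne_zero
  have hπprime : Prime π := hπirr.prime
  have hspanbot : Ideal.span {π} ≠ (⊥ : Ideal (Polynomial Fq)) := by
    simp [Ideal.span_singleton_eq_bot, hπ0]
  have hspanprime : (Ideal.span {π} : Ideal (Polynomial Fq)).IsPrime :=
    (Ideal.span_singleton_prime hπ0).mpr hπprime
  -- instances on the quotient
  haveI := hspanprime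
  haveI hmax : (Ideal.span {π} : Ideal (Polynomial Fq)).IsMaximal :=
    IsPrime.to_maximal_ideal hspanbot
  letI : Field (Polynomial Fq ⧸ (Ideal.span {π} : Ideal (Polynomial Fq))) :=
    Ideal.Quotient.field _
  haveI hfinmod : Module.Finite Fq (AdjoinRoot π) := (AdjoinRoot.powerBasis hπ0).finite
  haveI hfin : Finite (Polynomial Fq ⧸ (Ideal.span {π} : Ideal (Polynomial Fq))) :=
    (Module.finite_of_finite Fq (M := AdjoinRoot π))
  haveI : CharP (Polynomial Fq ⧸ (Ideal.span {π} : Ideal (Polynomial Fq))) p :=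
    charP_of_injective_algebraMap (algebraMap Fq _).injective p
  have hfrob : ∀ y : Polynomial Fq ⧸ (Ideal.span {π} : Ideal (Polynomial Fq)),
      ∃ w, w ^ p ^ (k.factorization p) = y := by
    have hinj : Function.Injective
        (fun x : Polynomial Fq ⧸ (Ideal.span {π} : Ideal (Polynomial Fq)) =>
          x ^ p ^ (k.factorization p)) := by
      intro x y hxy
      have h1 : (x - y) ^ p ^ (k.factorization p) = 0 := by
        rw [sub_pow_char_pow]
        simpa [sub_eq_zero] using hxy
      have h2 : x - y = 0 := pow_eq_zero_iff (pow_ne_zero _ hp.ne_zero) |>.mp h1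
      exact sub_eq_zero.mp h2
    exact fun y => Finite.injective_iff_surjective.mp hinj y
  -- the new ideal is in the set
  have hPnew : Ideal.span {π} ∈
      {P : Ideal (Polynomial Fq) | P ≠ ⊥ ∧ P.IsPrime ∧ IsPermutationChain k P r} := by
    refine ⟨hspanbot, hspanprime, ?_⟩
    intro σ
    constructor
    · intro i j i' j' h1 h2 hne hmem
      have hd : (∑ l ∈ Finset.Icc i j, r (σ l)) - (∑ l ∈ Finset.Icc i' j', r (σ l)) ∈ Dfin := by
        refine Finset.mem_image.mpr ⟨(σ, (i, j), (i', j')), ?_, rfl⟩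
        exact Finset.mem_filter.mpr ⟨Finset.mem_univ _, h1, h2, by simpa using hne⟩
      have hπd := Ideal.mem_span_singleton.mp hmem
      have hDpdvd : Dp ∣ Ep * Dp * Gp := ⟨Ep * Gp, by ring⟩
      exact hπM (hπd.trans ((Finset.dvd_prod_of_mem (fun d => d) hd).trans hDpdvd))
    · intro i j hij
      by_cases hs0 : (∑ l ∈ Finset.Icc i j, r (σ l)) = 0
      · exact ⟨0, by simp [hs0, zero_pow hk0]⟩
      · have hsS : (∑ l ∈ Finset.Icc i j, r (σ l)) ∈ S :=
          Finset.mem_filter.mpr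
            ⟨Finset.mem_image.mpr ⟨(σ, i, j), Finset.mem_univ _, rfl⟩, hs0⟩
        set s := ∑ l ∈ Finset.Icc i j, r (σ l) with hsdef
        have hFa0 : Ideal.Quotient.mk (Ideal.span {π}) (F.eval a) = 0 :=
          Ideal.Quotient.eq_zero_iff_mem.mpr (Ideal.mem_span_singleton.mpr hπF)
        have key : (Ideal.Quotient.mk (Ideal.span {π}) ((Ps s hsS).eval a)) ^ (n+1)
            = (Ideal.Quotient.mk (Ideal.span {π}) (E s hsS)) ^ (n+1)
              * Ideal.Quotient.mk (Ideal.span {π}) s := by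
        -- evaluate the identity at a and map to the quotient
          have h := congrArg
            (fun q : Polynomial (Polynomial Fq) => Ideal.Quotient.mk (Ideal.span {π}) (q.eval a))
            (hid s hsS)
          simp only [Polynomial.eval_sub, Polynomial.eval_pow, Polynomial.eval_mul,
            Polynomial.eval_C, map_sub, map_pow, map_mul, hFa0, zero_mul] at h
          exact sub_eq_zero.mp h
        have hmkE : Ideal.Quotient.mk (Ideal.span {π}) (E s hsS) ≠ 0 := by
          intro h0
          apply hπM
          have hdE : π ∣ E s hsS :=
            Ideal.mem_span_singleton.mp (Ideal.Quotient.eq_zero_iff_mem.mp h0)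
          have hEpdvd : Ep ∣ Ep * Dp * Gp := ⟨Dp * Gp, by ring⟩
          refine hdE.trans (Dvd.dvd.trans ?_ hEpdvd)
          exact Finset.dvd_prod_of_mem (fun s' => E s'.1 s'.2)
            (Finset.mem_attach S ⟨s, hsS⟩)
        set y := Ideal.Quotient.mk (Ideal.span {π}) ((Ps s hsS).eval a)
          * (Ideal.Quotient.mk (Ideal.span {π}) (E s hsS))⁻¹ with hy
        have hy1 : y ^ (n+1) = Ideal.Quotient.mk (Ideal.span {π}) s := by
          rw [hy, mul_pow, inv_pow, key,
            mul_comm ((Ideal.Quotient.mk (Ideal.span {π}) (E s hsS)) ^ (n+1)), mul_assoc,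
            mul_inv_cancel₀ (pow_ne_zero _ hmkE), mul_one]
        obtain ⟨w, hw⟩ := hfrob y
        obtain ⟨x, hx⟩ := Ideal.Quotient.mk_surjective w
        refine ⟨x, ?_⟩
        rw [← Ideal.Quotient.eq_zero_iff_mem, map_sub, map_pow, hx, ← hkk, pow_mul, hw, hn,
          hy1, sub_self]
  -- contradiction: the new ideal must already be in the finite set, but π does not divide Gp
  have hmemt : Ideal.span {π} ∈ hinf.toFinset := (Set.Finite.mem_toFinset hinf).mpr hPnew
  have hassoc : Associated (g _ hmemt) π := by
    rw [← Ideal.span_singleton_eq_span_singleton]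
    exact hgspan _ hmemt
  apply hπM
  have hGpdvd : Gp ∣ Ep * Dp * Gp := ⟨Ep * Dp, by ring⟩
  refine (hassoc.symm.dvd).trans (Dvd.dvd.trans ?_ hGpdvd)
  exact Finset.dvd_prod_of_mem (fun P => g P.1 P.2)
    (Finset.mem_attach hinf.toFinset ⟨Ideal.span {π}, hmemt⟩)
end

section
/- For all positive integers k and m, the sequence 1, 2, 2^2, ..., 2^{m-1} is an m-term permutation chain of kth power residue modulo p for infinitely many prime numbers p. -/
lemma vegh_sum_two_pow_range_lt (m : ℕ) : ∑ i ∈ Finset.range m, 2 ^ i < 2 ^ m := by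
  induction m with
  | zero => simp
  | succ n ih => rw [Finset.sum_range_succ, pow_succ]; omega

lemma vegh_icc_inj {m : ℕ} {i j i' j' : Fin m} (hij : i ≤ j) (hij' : i' ≤ j')
    (h : Finset.Icc i j = Finset.Icc i' j') : i = i' ∧ j = j' := by
  have h1 : i ∈ Finset.Icc i' j' := h ▸ Finset.mem_Icc.mpr ⟨le_refl i, hij⟩
  have h2 : i' ∈ Finset.Icc i j := h.symm ▸ Finset.mem_Icc.mpr ⟨le_refl i', hij'⟩
  have h3 : j ∈ Finset.Icc i' j' := h ▸ Finset.mem_Icc.mpr ⟨hij, le_refl j⟩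
  have h4 : j' ∈ Finset.Icc i j := h.symm ▸ Finset.mem_Icc.mpr ⟨hij', le_refl j'⟩
  simp only [Finset.mem_Icc] at h1 h2 h3 h4
  exact ⟨le_antisymm h2.1 h1.1, le_antisymm h3.2 h4.2⟩

/-- Quadratic reciprocity step: if `p ≡ 3 mod 4` and `p ≡ -1 mod q` for an odd prime `q`,
then `q` is a square mod `p`. -/
lemma vegh_square_q {p q : ℕ} [Fact p.Prime] [Fact q.Prime] (hp4 : p % 4 = 3)
    (hq2 : q ≠ 2) (hpq : (p : ZMod q) = -1) : IsSquare ((q : ℕ) : ZMod p) := by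
  have hp2 : p ≠ 2 := by intro h; rw [h] at hp4; norm_num at hp4
  have hq1 : q % 2 = 1 := (Fact.out : q.Prime).eq_two_or_odd.resolve_left hq2
  have hne : p ≠ q := by
    rintro rfl
    rw [ZMod.natCast_self] at hpq
    exact (neg_ne_zero.mpr one_ne_zero) hpq.symm
  have e1 : legendreSym q (p : ℤ) = legendreSym q (-1) := by
    unfold legendreSym
    congr 1
    push_cast [hpq]
    norm_num
  have e2 : legendreSym q (-1) = ZMod.χ₄ q := legendreSym.at_neg_one hq2
  have e3 : legendreSym q (p : ℤ) = (-1 : ℤ) ^ (p / 2 * (q / 2)) * legendreSym p (q : ℤ) :=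
    legendreSym.quadratic_reciprocity' hp2 hq2
  have e4 : (-1 : ℤ) ^ (p / 2 * (q / 2)) = (-1 : ℤ) ^ (q / 2) := by
    rw [pow_mul, ZMod.neg_one_pow_div_two_of_three_mod_four hp4]
  have e5 : (ZMod.χ₄ q : ℤ) = (-1 : ℤ) ^ (q / 2) := ZMod.χ₄_eq_neg_one_pow hq1
  have e6 : legendreSym p (q : ℤ) = 1 := by
    have h := (e1.trans e2).symm.trans e3
    rw [e4, e5] at h
    have hnz : ((-1 : ℤ) ^ (q / 2)) ≠ 0 := pow_ne_zero _ (by norm_num)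
    exact mul_left_cancel₀ hnz (by rw [mul_one]; exact h.symm)
  exact (legendreSym.eq_one_iff' p (ZMod.prime_ne_zero p q hne)).mp e6

/-- Closure of squares under the multiplicative structure of small numbers. -/
lemma vegh_all_squares {p B : ℕ} [Fact p.Prime]
    (hprime : ∀ q : ℕ, q.Prime → q < B → IsSquare ((q : ℕ) : ZMod p)) :
    ∀ c : ℕ, 0 < c → c < B → IsSquare ((c : ℕ) : ZMod p) := by
  intro c
  induction c using Nat.strong_induction_on with
  | _ c ih =>
    intro hc0 hcB
    rcases eq_or_ne c 1 with rfl | hc1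
    · simpa using (isSquare_one : IsSquare (1 : ZMod p))
    · have hq : c.minFac.Prime := Nat.minFac_prime hc1
      have hqd : c.minFac ∣ c := Nat.minFac_dvd c
      have hce : c.minFac * (c / c.minFac) = c := Nat.mul_div_cancel' hqd
      have h1 : IsSquare ((c.minFac : ℕ) : ZMod p) :=
        hprime _ hq (lt_of_le_of_lt (Nat.le_of_dvd hc0 hqd) hcB)
      have hdlt : c / c.minFac < c := Nat.div_lt_self hc0 hq.one_lt
      have hdpos : 0 < c / c.minFac := Nat.div_pos (Nat.minFac_le hc0) hq.pos
      have h2 : IsSquare ((c / c.minFac : ℕ) : ZMod p) :=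
        ih _ hdlt hdpos (lt_trans hdlt hcB)
      have : ((c : ℕ) : ZMod p) = (c.minFac : ZMod p) * ((c / c.minFac : ℕ) : ZMod p) := by
        rw [← Nat.cast_mul, hce]
      rw [this]
      exact h1.mul h2

/-- If `gcd k (p-1) ∣ 2` then every nonzero square mod `p` is a `k`th power. -/
lemma vegh_kth_power_of_square {p k : ℕ} [Fact p.Prime] (hd : Nat.gcd k (p - 1) ∣ 2)
    {c : ZMod p} (hc0 : c ≠ 0) (hsq : IsSquare c) : ∃ x : ZMod p, x ^ k = c := by
  obtain ⟨w, hw⟩ := hsq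
  have hw0 : w ≠ 0 := by rintro rfl; rw [mul_zero] at hw; exact hc0 hw
  set u : (ZMod p)ˣ := Units.mk0 w hw0 with hu
  obtain ⟨e, he⟩ := hd
  set d := Nat.gcd k (p - 1) with hdd
  set A := Nat.gcdA k (p - 1) with hA
  set B := Nat.gcdB k (p - 1) with hB
  have hbez : (d : ℤ) = (k : ℤ) * A + ((p - 1 : ℕ) : ℤ) * B := Nat.gcd_eq_gcd_ab k (p - 1)
  set h : (ZMod p)ˣ := u ^ e with hh
  have h1 : h ^ (d : ℤ) = (h ^ A) ^ (k : ℤ) * (h ^ B) ^ ((p - 1 : ℕ) : ℤ) := by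
    rw [← zpow_mul, ← zpow_mul, ← zpow_add, hbez]
    ring_nf
  have h2 : (h ^ B) ^ ((p - 1 : ℕ) : ℤ) = 1 := by
    rw [zpow_natCast]; exact ZMod.units_pow_card_sub_one_eq_one p _
  have h3 : (h ^ A) ^ (k : ℤ) = h ^ (d : ℤ) := by rw [h1, h2, mul_one]
  have h4 : h ^ (d : ℤ) = u ^ 2 := by
    rw [zpow_natCast, hh, ← pow_mul, mul_comm e d, ← he]
  refine ⟨((h ^ A : (ZMod p)ˣ) : ZMod p), ?_⟩
  have h5 : (h ^ A) ^ k = u ^ 2 := by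
    rw [← zpow_natCast (h ^ A) k, h3, h4]
  calc ((h ^ A : (ZMod p)ˣ) : ZMod p) ^ k = (((h ^ A) ^ k : (ZMod p)ˣ) : ZMod p) := by
        rw [Units.val_pow_eq_pow_val]
    _ = ((u ^ 2 : (ZMod p)ˣ) : ZMod p) := by rw [h5]
    _ = w * w := by rw [Units.val_pow_eq_pow_val, hu, Units.val_mk0, sq]
    _ = c := hw.symm

lemma vegh_key {k m p : ℕ} (hk : 0 < k) (hm : 0 < m) [Fact p.Prime]
    (hp8 : p % 8 = 7)
    (hQ : ∀ q : ℕ, q.Prime → q % 2 = 1 → (q < 2 ^ m ∨ q ∣ k) → (p : ZMod q) = -1)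
    (hpm : 2 ^ m < p) :
    IsPermutationChain k (Ideal.span {(p : ℤ)}) (fun i : Fin m => (2 : ℤ) ^ (i : ℕ)) := by
  have hp4 : p % 4 = 3 := by omega
  -- all small positives are squares mod p
  have hsq : ∀ c : ℕ, 0 < c → c < 2 ^ m → IsSquare ((c : ℕ) : ZMod p) := by
    apply vegh_all_squares
    intro q hq hqm
    rcases eq_or_ne q 2 with rfl | hq2
    · have := (ZMod.exists_sq_eq_two_iff (p := p) (by omega)).mpr (Or.inr hp8)
      simpa using this
    · haveI := Fact.mk hq
      exact vegh_square_q hp4 hq2 (hQ q hq (hq.eq_two_or_odd.resolve_left hq2) (Or.inl hqm))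
  -- gcd k (p-1) divides 2
  have hgcd : Nat.gcd k (p - 1) ∣ 2 := by
    set d := Nat.gcd k (p - 1) with hd
    obtain ⟨s, hs⟩ : ∃ s, p = 8 * s + 7 := ⟨p / 8, by omega⟩
    have ht : p - 1 = 2 * (4 * s + 3) := by omega
    have hco : Nat.Coprime d (4 * s + 3) := by
      by_contra hco
      have hg0 : Nat.gcd d (4 * s + 3) ≠ 1 := hco
      set g := Nat.gcd d (4 * s + 3) with hg
      have hr : g.minFac.Prime := Nat.minFac_prime hg0
      set r := g.minFac with hrdef
      have hrd : r ∣ d := dvd_trans (Nat.minFac_dvd g) (Nat.gcd_dvd_left _ _)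
      have hrt : r ∣ 4 * s + 3 := dvd_trans (Nat.minFac_dvd g) (Nat.gcd_dvd_right _ _)
      have hrk : r ∣ k := dvd_trans hrd (Nat.gcd_dvd_left _ _)
      have hrp1 : r ∣ p - 1 := dvd_trans hrd (Nat.gcd_dvd_right _ _)
      have hr2 : r ≠ 2 := by
        intro h2
        rw [h2] at hrt
        omega
      have hrodd : r % 2 = 1 := hr.eq_two_or_odd.resolve_left hr2
      haveI := Fact.mk hr
      haveI : NeZero r := ⟨hr.pos.ne'⟩
      have hneg : (p : ZMod r) = -1 := hQ r hr hrodd (Or.inr hrk)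
      have hpos : (p : ZMod r) = 1 := by
        have hp1 : p - 1 + 1 = p := by omega
        rw [← hp1]
        push_cast
        rw [(ZMod.natCast_eq_zero_iff (p - 1) r).mpr hrp1]
        ring
      have h20 : ((2 : ℕ) : ZMod r) = 0 := by
        have h1 : (1 : ZMod r) = -1 := hpos ▸ hneg
        push_cast
        linear_combination h1
      have := (ZMod.natCast_eq_zero_iff 2 r).mp h20
      have : r = 2 := ((Nat.prime_dvd_prime_iff_eq hr Nat.prime_two).mp this)
      exact hr2 this
    have hdvd1 : d ∣ 2 * (4 * s + 3) := ht ▸ Nat.gcd_dvd_right k (p - 1)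
    exact (Nat.Coprime.dvd_of_dvd_mul_right hco hdvd1)
  intro σ
  have hinj : Function.Injective (fun l : Fin m => (σ l : ℕ)) :=
    fun a b hab => σ.injective (Fin.val_injective hab)
  -- each interval sum equals a natural number in [1, 2^m)
  have hsum : ∀ i j : Fin m, i ≤ j →
      ∃ n : ℕ, (∑ l ∈ Finset.Icc i j, (2 : ℤ) ^ ((σ l : ℕ))) = (n : ℤ) ∧
        (∑ t ∈ (Finset.Icc i j).image (fun l => (σ l : ℕ)), 2 ^ t) = n ∧
        0 < n ∧ n < 2 ^ m := by
    intro i j hij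
    refine ⟨∑ l ∈ Finset.Icc i j, 2 ^ ((σ l : ℕ)), by push_cast; rfl, ?_, ?_, ?_⟩
    · exact Finset.sum_image (fun a _ b _ hab => hinj hab)
    · apply Finset.sum_pos (fun l _ => pow_pos two_pos _)
      exact ⟨i, Finset.mem_Icc.mpr ⟨le_refl i, hij⟩⟩
    · calc (∑ l ∈ Finset.Icc i j, 2 ^ ((σ l : ℕ)))
          = ∑ t ∈ (Finset.Icc i j).image (fun l => (σ l : ℕ)), 2 ^ t :=
            (Finset.sum_image (fun a _ b _ hab => hinj hab)).symm
        _ ≤ ∑ t ∈ Finset.range m, 2 ^ t := by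
            apply Finset.sum_le_sum_of_subset
            intro t ht
            obtain ⟨l, _, rfl⟩ := Finset.mem_image.mp ht
            exact Finset.mem_range.mpr (σ l).is_lt
        _ < 2 ^ m := vegh_sum_two_pow_range_lt m
  constructor
  · intro i j i' j' hij hij' hne hmem
    obtain ⟨n, hc1, himg, hpos, hlt⟩ := hsum i j hij
    obtain ⟨n', hc1', himg', hpos', hlt'⟩ := hsum i' j' hij'
    simp only at hmem
    rw [hc1, hc1', Ideal.mem_span_singleton] at hmem
    have hnn : n ≠ n' := by
      intro hnneq
      have himgs : (Finset.Icc i j).image (fun l => (σ l : ℕ))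
          = (Finset.Icc i' j').image (fun l => (σ l : ℕ)) := by
        apply Finset.geomSum_injective (le_refl 2)
        simp only
        rw [himg, himg', hnneq]
      have := Finset.image_injective hinj himgs
      obtain ⟨h1, h2⟩ := vegh_icc_inj hij hij' this
      exact hne (by rw [h1, h2])
    have hdne : (n : ℤ) - (n' : ℤ) ≠ 0 := sub_ne_zero.mpr (by exact_mod_cast hnn)
    have hle := Int.le_of_dvd (abs_pos.mpr hdne) ((dvd_abs _ _).mpr hmem)
    have hb1 : (n : ℤ) < 2 ^ m := by exact_mod_cast hlt
    have hb2 : (n' : ℤ) < 2 ^ m := by exact_mod_cast hlt'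
    have hb3 : (0 : ℤ) ≤ n := Int.natCast_nonneg n
    have hb4 : (0 : ℤ) ≤ n' := Int.natCast_nonneg n'
    have hbp : ((2 : ℤ) ^ m) < p := by exact_mod_cast hpm
    have : |(n : ℤ) - (n' : ℤ)| < p := by
      rw [abs_sub_lt_iff]
      constructor <;> linarith
    linarith
  · intro i j hij
    obtain ⟨n, hc1, himg, hpos, hlt⟩ := hsum i j hij
    simp only
    rw [hc1]
    have hs := hsq n hpos hlt
    have hn0 : ((n : ℕ) : ZMod p) ≠ 0 := by
      rw [Ne, ZMod.natCast_eq_zero_iff]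
      intro hdvd
      have := Nat.le_of_dvd hpos hdvd
      omega
    obtain ⟨x, hx⟩ := vegh_kth_power_of_square hgcd hn0 hs
    refine ⟨(x.val : ℤ), ?_⟩
    rw [Ideal.mem_span_singleton]
    have hz : (((x.val : ℤ) ^ k - (n : ℤ) : ℤ) : ZMod p) = 0 := by
      push_cast
      rw [ZMod.natCast_val, ZMod.cast_id', id_eq, hx]
      ring
    exact (ZMod.intCast_zmod_eq_zero_iff_dvd _ p).mp hz

theorem vegh_powers_of_two_permutation_chain (k m : ℕ) (hk : 0 < k) (hm : 0 < m) :
    {p : ℕ | p.Prime ∧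
      IsPermutationChain k (Ideal.span {(p : ℤ)}) (fun i : Fin m => (2 : ℤ) ^ (i : ℕ))}.Infinite := by
  classical
  set B := 2 ^ m with hB
  have hB0 : 0 < B := pow_pos (by norm_num) m
  set Q := (Finset.range (B + k)).filter (fun q => q.Prime ∧ q % 2 = 1 ∧ (q < B ∨ q ∣ k))
    with hQdef
  set M := 8 * ∏ q ∈ Q, q with hM
  have hMpos : 0 < M := by
    apply Nat.mul_pos (by norm_num)
    exact Finset.prod_pos (fun q hq => ((Finset.mem_filter.mp hq).2.1).pos)
  haveI : NeZero M := ⟨hMpos.ne'⟩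
  have hDir := Nat.infinite_setOfPred_prime_and_eq_mod (q := M) (a := -1) isUnit_one.neg
  apply Set.Infinite.mono ?_ (hDir.diff (Set.finite_Iic B))
  rintro p ⟨hp1, hpB⟩
  obtain ⟨hp, hpM⟩ := hp1
  simp only [Set.mem_Iic, not_le] at hpB
  haveI := Fact.mk hp
  have hmodq : ∀ q : ℕ, 0 < q → q ∣ M → (p : ZMod q) = -1 := by
    intro q hq0 hqM
    haveI : NeZero q := ⟨hq0.ne'⟩
    have h1 : p ≡ M - 1 [MOD M] := by
      rw [← ZMod.natCast_eq_natCast_iff, hpM, Nat.cast_sub hMpos, ZMod.natCast_self]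
      ring
    have h2 : p ≡ M - 1 [MOD q] := Nat.ModEq.of_dvd hqM h1
    rw [← ZMod.natCast_eq_natCast_iff] at h2
    rw [h2, Nat.cast_sub hMpos, (ZMod.natCast_eq_zero_iff M q).mpr hqM]
    ring
  have hp8 : p % 8 = 7 := by
    have h8 : (p : ZMod 8) = -1 := hmodq 8 (by norm_num) ⟨∏ q ∈ Q, q, hM⟩
    have h7 : (p : ZMod 8) = ((7 : ℕ) : ZMod 8) := by rw [h8]; decide
    have := (ZMod.natCast_eq_natCast_iff p 7 8).mp h7
    simpa [Nat.ModEq] using this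
  refine ⟨hp, vegh_key hk hm hp8 ?_ hpB⟩
  intro q hq hq1 hqcond
  apply hmodq q hq.pos
  apply dvd_mul_of_dvd_right
  apply Finset.dvd_prod_of_mem
  rw [hQdef, Finset.mem_filter, Finset.mem_range]
  refine ⟨?_, hq, hq1, hqcond⟩
  rcases hqcond with h | h
  · omega
  · have := Nat.le_of_dvd hk h
    omega
end

section
/- Let K be a number field with ring of integers O_K and let k and m be positive integers. Then there exist elements r_1, ..., r_m of O_K such that the set of nonzero prime ideals P of O_K for which r_1, ..., r_m is an m-term permutation chain of kth power residue modulo P is infinite. In fact, for any prime number p, the sequence r_i = p^{i-1} (i = 1, ..., m), viewed in O_K, has this property. -/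
open Finset in
lemma sumPow_lt {p : ℕ} (hp : 2 ≤ p) {n : ℕ} {T : Finset ℕ} (hT : T ⊆ Finset.range n) :
    ∑ e ∈ T, p ^ e < p ^ n :=
  Nat.geomSum_lt hp fun _ hk => Finset.mem_range.mp (hT hk)

open Finset in
lemma sumPow_injOn {p : ℕ} (hp : 2 ≤ p) :
    ∀ n (T T' : Finset ℕ), T ⊆ Finset.range n → T' ⊆ Finset.range n →
      (∑ e ∈ T, p ^ e) = ∑ e ∈ T', p ^ e → T = T' := by
  intro n
  induction n with
  | zero =>
    intro T T' hT hT' _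
    simp only [Finset.range_zero, Finset.subset_empty] at hT hT'
    rw [hT, hT']
  | succ n ih =>
    intro T T' hT hT' hsum
    have key : ∀ S : Finset ℕ, S ⊆ Finset.range (n+1) → n ∉ S → S ⊆ Finset.range n := by
      intro S hS hn x hx
      have h1 := Finset.mem_range.mp (hS hx)
      have h2 : x ≠ n := fun h => hn (h ▸ hx)
      exact Finset.mem_range.mpr (by omega)
    by_cases h1 : n ∈ T <;> by_cases h2 : n ∈ T'
    · have e1 : ∑ e ∈ T, p ^ e = p ^ n + ∑ e ∈ T.erase n, p ^ e :=
        (Finset.add_sum_erase _ _ h1).symm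
      have e2 : ∑ e ∈ T', p ^ e = p ^ n + ∑ e ∈ T'.erase n, p ^ e :=
        (Finset.add_sum_erase _ _ h2).symm
      have hTe : T.erase n ⊆ Finset.range n :=
        key _ (Finset.Subset.trans (Finset.erase_subset _ _) hT) (Finset.notMem_erase _ _)
      have hTe' : T'.erase n ⊆ Finset.range n :=
        key _ (Finset.Subset.trans (Finset.erase_subset _ _) hT') (Finset.notMem_erase _ _)
      have hs : (∑ e ∈ T.erase n, p ^ e) = ∑ e ∈ T'.erase n, p ^ e := by omega
      have := ih _ _ hTe hTe' hs
      rw [← Finset.insert_erase h1, ← Finset.insert_erase h2, this]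
    · exfalso
      have hge : p ^ n ≤ ∑ e ∈ T, p ^ e := Finset.single_le_sum (fun _ _ => Nat.zero_le _) h1
      have hlt : ∑ e ∈ T', p ^ e < p ^ n := sumPow_lt hp (key _ hT' h2)
      omega
    · exfalso
      have hge : p ^ n ≤ ∑ e ∈ T', p ^ e := Finset.single_le_sum (fun _ _ => Nat.zero_le _) h2
      have hlt : ∑ e ∈ T, p ^ e < p ^ n := sumPow_lt hp (key _ hT h1)
      omega
    · exact ih _ _ (key _ hT h1) (key _ hT' h2) hsum

lemma isSquare_nat_of_dvd_succ {q b : ℕ} (hq : q.Prime) (hq8 : q % 8 = 7)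
    (hb2 : b % 2 = 1) (hb1 : b ∣ q + 1) (hqb : ¬ q ∣ b) :
    IsSquare ((b : ℕ) : ZMod q) := by
  haveI : Fact q.Prime := ⟨hq⟩
  have hb0 : ((b : ℕ) : ZMod q) ≠ 0 := by
    rw [Ne, ZMod.natCast_eq_zero_iff]; exact hqb
  have hq4 : q % 4 = 3 := by omega
  have hqodd : Odd q := by rw [Nat.odd_iff]; omega
  have hbodd : Odd b := Nat.odd_iff.mpr hb2
  have hdvd : (b : ℤ) ∣ (-1 : ℤ) - (q : ℤ) := by
    have h : (b : ℤ) ∣ ((q : ℤ) + 1) := by exact_mod_cast Int.natCast_dvd_natCast.mpr hb1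
    have := h.neg_right
    simpa [neg_add, sub_eq_add_neg] using this
  have hmod : (q : ℤ) ≡ -1 [ZMOD (b : ℤ)] := Int.modEq_iff_dvd.mpr hdvd
  have hmod' : (q : ℤ) % (b : ℤ) = (-1 : ℤ) % (b : ℤ) := hmod
  have hJq : jacobiSym (q : ℤ) b = ZMod.χ₄ b := by
    rw [jacobiSym.mod_left' hmod', jacobiSym.at_neg_one hbodd]
  have hJ : jacobiSym (b : ℤ) q = 1 := by
    rcases (by omega : b % 4 = 1 ∨ b % 4 = 3) with hb4 | hb4
    · rw [jacobiSym.quadratic_reciprocity_one_mod_four hb4 hqodd, hJq,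
        ZMod.χ₄_nat_one_mod_four hb4]
    · rw [jacobiSym.quadratic_reciprocity_three_mod_four hb4 hq4, hJq,
        ZMod.χ₄_nat_three_mod_four hb4]
      ring
  have hL : legendreSym q (b : ℤ) = 1 := by
    rw [jacobiSym.legendreSym.to_jacobiSym q b]; exact hJ
  have := (legendreSym.eq_one_iff' q hb0).mp hL
  exact this



lemma intCast_not_mem_of_not_dvd {A : Type*} [CommRing A] {P : Ideal A} (hP : P ≠ ⊤)
    {q : ℕ} (hq : q.Prime) (hqP : ((q : ℕ) : A) ∈ P) {n : ℤ} (hn : ¬ (q : ℤ) ∣ n) :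
    ((n : ℤ) : A) ∉ P := by
  intro hmem
  have h1 : Nat.Coprime q n.natAbs := (Nat.Prime.coprime_iff_not_dvd hq).mpr
    (fun h => hn (Int.dvd_natAbs.mp (Int.natCast_dvd_natCast.mpr h)))
  have hcop : IsCoprime (q : ℤ) n := by
    rw [Int.isCoprime_iff_gcd_eq_one]
    simpa [Int.gcd] using h1
  obtain ⟨u, v, huv⟩ := hcop
  have hone : ((1 : ℤ) : A) ∈ P := by
    rw [← huv]
    push_cast
    exact Ideal.add_mem _ (P.mul_mem_left _ hqP) (P.mul_mem_left _ hmem)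
  rw [Int.cast_one] at hone
  exact hP (P.eq_top_iff_one.mpr hone)

lemma isKthPowerResidue_of {A : Type*} [CommRing A] {P : Ideal A} {k q : ℕ} (hq : q.Prime)
    (hk : 0 < k) (hqP : ((q : ℕ) : A) ∈ P) {S : ℕ} (hS : ¬ q ∣ S)
    (hodd : ∀ ℓ : ℕ, ℓ.Prime → ℓ ∣ k → ℓ ∣ q - 1 → ℓ = 2)
    (h2 : 2 ∣ k → q % 4 = 3 ∧ IsSquare ((S : ℕ) : ZMod q)) :
    IsKthPowerResidue k P ((S : ℕ) : A) := by
  haveI : Fact q.Prime := ⟨hq⟩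
  have hq2 : 2 ≤ q := hq.two_le
  have hS0 : ((S : ℕ) : ZMod q) ≠ 0 := by
    rw [Ne, ZMod.natCast_eq_zero_iff]; exact hS
  obtain ⟨r, hr0, hSr, hrcop⟩ :
      ∃ r : ℕ, 0 < r ∧ ((S : ℕ) : ZMod q) ^ r = 1 ∧ Nat.Coprime r k := by
    by_cases h2k : 2 ∣ k
    · obtain ⟨hq4, hsq⟩ := h2 h2k
      obtain ⟨t, ht⟩ := hsq
      have ht0 : t ≠ 0 := by
        rintro rfl
        rw [mul_zero] at ht
        exact hS0 ht
      refine ⟨(q - 1) / 2, by omega, ?_, ?_⟩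
      · calc ((S : ℕ) : ZMod q) ^ ((q - 1) / 2) = (t * t) ^ ((q - 1) / 2) := by rw [ht]
          _ = t ^ (q - 1) := by rw [← sq, ← pow_mul]; congr 1; omega
          _ = 1 := ZMod.pow_card_sub_one_eq_one ht0
      · apply Nat.coprime_of_dvd'
        intro ℓ hℓ hℓr hℓk
        exfalso
        have hℓ2 : ℓ = 2 :=
          hodd ℓ hℓ hℓk (hℓr.trans (Nat.div_dvd_of_dvd (by omega)))
        subst hℓ2
        obtain ⟨w, hw⟩ := hℓr
        omega
    · refine ⟨q - 1, by omega, ZMod.pow_card_sub_one_eq_one hS0, ?_⟩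
      apply Nat.coprime_of_dvd'
      intro ℓ hℓ hℓr hℓk
      exfalso
      have hℓ2 : ℓ = 2 := hodd ℓ hℓ hℓk hℓr
      subst hℓ2
      exact h2k hℓk
  obtain ⟨c, t, hct⟩ : ∃ c t : ℕ, c * k = r * t + 1 := by
    rcases Nat.lt_or_ge 1 r with hr1 | hr1
    · obtain ⟨c, -, hc⟩ := Nat.exists_mul_mod_eq_one_of_coprime hrcop.symm hr1
      refine ⟨c, (k * c) / r, ?_⟩
      have := Nat.div_add_mod (k * c) r
      rw [mul_comm c k]
      rw [hc] at this
      omega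
    · have : r = 1 := by omega
      subst this
      exact ⟨1, k - 1, by omega⟩
  have key : (q : ℤ) ∣ ((S : ℕ) : ℤ) ^ (c * k) - ((S : ℕ) : ℤ) := by
    rw [← ZMod.intCast_zmod_eq_zero_iff_dvd]
    push_cast
    rw [hct, pow_add, pow_mul, hSr, one_pow, pow_one, one_mul, sub_self]
  obtain ⟨w, hw⟩ := key
  refine ⟨((S : ℕ) : A) ^ c, ?_⟩
  have hcast : ((((S : ℕ) : ℤ) ^ (c * k) - ((S : ℕ) : ℤ) : ℤ) : A) =
      (((S : ℕ) : A) ^ c) ^ k - ((S : ℕ) : A) := by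
    push_cast [← pow_mul]
    ring
  rw [← hcast, hw]
  push_cast
  exact Ideal.mul_mem_right _ _ hqP

lemma chain_of_dvd {A : Type*} [CommRing A] {k m p q : ℕ}
    (hp : p.Prime) (hq : q.Prime) (hk : 0 < k)
    (hM : 8 * k * (p ^ m).factorial ∣ q + 1) (hlt : p ^ m < q)
    {P : Ideal A} (hPp : P.IsPrime)
    (hqP : ((q : ℕ) : A) ∈ P) :
    IsPermutationChain k P (fun i : Fin m => ((p : ℕ) : A) ^ (i : ℕ)) := by
  have hp2 : 2 ≤ p := hp.two_le
  have h8 : (8 : ℕ) ∣ q + 1 := dvd_trans ⟨k * (p ^ m).factorial, by ring⟩ hM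
  have hq8 : q % 8 = 7 := by have := hq.two_le; omega
  have hkM : k ∣ q + 1 := dvd_trans ⟨8 * (p ^ m).factorial, by ring⟩ hM
  have hFM : (p ^ m).factorial ∣ q + 1 := dvd_trans ⟨8 * k, by ring⟩ hM
  intro σ
  set g : Fin m → ℕ := fun l => ((σ l : Fin m) : ℕ) with hg
  have hginj : Function.Injective g := fun a b hab => σ.injective (Fin.val_injective hab)
  set Nf : Fin m → Fin m → ℕ := fun i j => ∑ l ∈ Finset.Icc i j, p ^ g l with hNf
  have him : ∀ a c : Fin m, ((Finset.Icc a c).image g) ⊆ Finset.range m := by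
    intro a c x hx
    obtain ⟨l, _, rfl⟩ := Finset.mem_image.mp hx
    exact Finset.mem_range.mpr (σ l).is_lt
  have hsum : ∀ a c : Fin m, Nf a c = ∑ e ∈ (Finset.Icc a c).image g, p ^ e :=
    fun a c => (Finset.sum_image (fun x _ y _ h => hginj h)).symm
  have hub : ∀ a c : Fin m, Nf a c < p ^ m := by
    intro a c; rw [hsum]; exact sumPow_lt hp2 (him a c)
  have hlb : ∀ a c : Fin m, a ≤ c → 0 < Nf a c := by
    intro a c hac
    exact Finset.sum_pos (fun _ _ => pow_pos hp.pos _) ⟨a, Finset.mem_Icc.mpr ⟨le_refl _, hac⟩⟩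
  have hinj : ∀ i j i' j' : Fin m, i ≤ j → i' ≤ j' → Nf i j = Nf i' j' →
      i = i' ∧ j = j' := by
    intro i j i' j' hij hij' heq
    rw [hsum, hsum] at heq
    have hTT := sumPow_injOn hp2 m _ _ (him i j) (him i' j') heq
    have hIcc : Finset.Icc i j = Finset.Icc i' j' := Finset.image_injective hginj hTT
    have h1 : i' ∈ Finset.Icc i j := by rw [hIcc]; exact Finset.mem_Icc.mpr ⟨le_refl _, hij'⟩
    have h2 : i ∈ Finset.Icc i' j' := by rw [← hIcc]; exact Finset.mem_Icc.mpr ⟨le_refl _, hij⟩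
    have h3 : j' ∈ Finset.Icc i j := by rw [hIcc]; exact Finset.mem_Icc.mpr ⟨hij', le_refl _⟩
    have h4 : j ∈ Finset.Icc i' j' := by rw [← hIcc]; exact Finset.mem_Icc.mpr ⟨hij, le_refl _⟩
    exact ⟨le_antisymm (Finset.mem_Icc.mp h1).1 (Finset.mem_Icc.mp h2).1,
      le_antisymm (Finset.mem_Icc.mp h4).2 (Finset.mem_Icc.mp h3).2⟩
  have hcast : ∀ a c : Fin m,
      (∑ l ∈ Finset.Icc a c, ((p : ℕ) : A) ^ ((σ l : Fin m) : ℕ)) = ((Nf a c : ℕ) : A) := by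
    intro a c
    rw [hNf]
    push_cast
    rfl
  constructor
  · intro i j i' j' hij hij' hne hmem
    simp only at hmem
    rw [hcast i j, hcast i' j'] at hmem
    have hne' : Nf i j ≠ Nf i' j' := by
      intro h
      obtain ⟨h1, h2⟩ := hinj i j i' j' hij hij' h
      exact hne (by rw [h1, h2])
    have hdiff : ((Nf i j : ℕ) : A) - ((Nf i' j' : ℕ) : A) =
        (((Nf i j : ℤ) - (Nf i' j' : ℤ) : ℤ) : A) := by push_cast; ring
    rw [hdiff] at hmem
    refine intCast_not_mem_of_not_dvd hPp.ne_top hq hqP ?_ hmem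
    intro hdvd
    have h0 : (Nf i j : ℤ) - (Nf i' j' : ℤ) ≠ 0 := by
      have := hne'; omega
    have habs := Int.eq_zero_of_abs_lt_dvd hdvd ?_
    · exact h0 habs
    · have u1 := hub i j
      have u2 := hub i' j'
      have l1 := hlb i j hij
      have l2 := hlb i' j' hij'
      rw [abs_lt]
      constructor <;> [skip; skip] <;> push_cast <;> omega
  · intro i j hij
    simp only
    rw [hcast i j]
    have hN0 : 0 < Nf i j := hlb i j hij
    have hNlt : Nf i j < q := lt_trans (hub i j) hlt
    refine isKthPowerResidue_of hq hk hqP ?_ ?_ ?_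
    · intro hdvd
      have := Nat.le_of_dvd hN0 hdvd
      omega
    · intro ℓ hℓ hℓk hℓq1
      have hℓq : ℓ ∣ q + 1 := hℓk.trans hkM
      have hsub : ℓ ∣ q + 1 - (q - 1) := Nat.dvd_sub hℓq hℓq1
      have h22 : q + 1 - (q - 1) = 2 := by have := hq.two_le; omega
      rw [h22] at hsub
      exact (Nat.prime_dvd_prime_iff_eq hℓ Nat.prime_two).mp hsub
    · intro h2k
      refine ⟨by omega, ?_⟩
      set N := Nf i j with hNdef
      set v := N.factorization 2 with hv
      set b := N / 2 ^ v with hb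
      have hN0' : N ≠ 0 := by omega
      have hNb : N = 2 ^ v * b := (Nat.ordProj_mul_ordCompl_eq_self N 2).symm
      have hbodd : ¬ 2 ∣ b := Nat.not_dvd_ordCompl Nat.prime_two hN0'
      have hb2 : b % 2 = 1 := by omega
      have hbN : b ∣ N := Nat.ordCompl_dvd N 2
      have hb0 : 0 < b := Nat.pos_of_ne_zero (by intro h; rw [h, mul_zero] at hNb; omega)
      have hbq1 : b ∣ q + 1 :=
        (hbN.trans (Nat.dvd_factorial hN0 (le_of_lt (hub i j)))).trans hFM
      have hqb : ¬ q ∣ b := by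
        intro h
        have := Nat.le_of_dvd hb0 h
        have := Nat.le_of_dvd hN0 hbN
        omega
      have hsqb : IsSquare ((b : ℕ) : ZMod q) := isSquare_nat_of_dvd_succ hq hq8 hb2 hbq1 hqb
      have hsq2 : IsSquare ((2 : ℕ) : ZMod q) := by
        haveI : Fact q.Prime := ⟨hq⟩
        have hq2' : q ≠ 2 := by omega
        rw [Nat.cast_ofNat]
        exact (ZMod.exists_sq_eq_two_iff hq2').mpr (Or.inr hq8)
      obtain ⟨x, hx⟩ := hsq2.pow (n := v)
      obtain ⟨y, hy⟩ := hsqb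
      refine ⟨x * y, ?_⟩
      rw [hNb]
      push_cast
      rw [show ((2 : ℕ) : ZMod q) = 2 from Nat.cast_ofNat] at hx
      rw [hx, hy]
      ring

theorem exists_permutation_chain_numberField (K : Type*) [Field K] [NumberField K]
    (k m : ℕ) (hk : 0 < k) (hm : 0 < m) :
    (∃ r : Fin m → NumberField.RingOfIntegers K,
      {P : Ideal (NumberField.RingOfIntegers K) |
        P ≠ ⊥ ∧ P.IsPrime ∧ IsPermutationChain k P r}.Infinite) ∧
    ∀ p : ℕ, p.Prime →
      {P : Ideal (NumberField.RingOfIntegers K) |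
        P ≠ ⊥ ∧ P.IsPrime ∧
          IsPermutationChain k P
            (fun i : Fin m => (p : NumberField.RingOfIntegers K) ^ (i : ℕ))}.Infinite := by
  have main : ∀ p : ℕ, p.Prime →
      {P : Ideal (NumberField.RingOfIntegers K) |
        P ≠ ⊥ ∧ P.IsPrime ∧
          IsPermutationChain k P
            (fun i : Fin m => (p : NumberField.RingOfIntegers K) ^ (i : ℕ))}.Infinite := by
    intro p hp
    set O := NumberField.RingOfIntegers K
    set M : ℕ := 8 * k * (p ^ m).factorial with hMdef
    have hM0 : 0 < M := by positivity
    haveI : NeZero M := ⟨hM0.ne'⟩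
    have hunit : IsUnit (-1 : ZMod M) := IsUnit.neg isUnit_one
    have hinf : {q : ℕ | q.Prime ∧ (q : ZMod M) = -1}.Infinite :=
      Nat.infinite_setOfPred_prime_and_eq_mod hunit
    set S : Set ℕ := {q : ℕ | q.Prime ∧ (q : ZMod M) = -1} \ Set.Iic (p ^ m) with hSdef
    have hinf2 : S.Infinite := hinf.diff (Set.finite_Iic (p ^ m))
    have hker : RingHom.ker (algebraMap ℤ O) = ⊥ :=
      (RingHom.injective_iff_ker_eq_bot _).mp (RingHom.injective_int _)
    have hex : ∀ q ∈ S, ∃ P : Ideal O, P ≠ ⊥ ∧ P.IsPrime ∧ ((q : ℕ) : O) ∈ P ∧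
        IsPermutationChain k P (fun i : Fin m => ((p : ℕ) : O) ^ (i : ℕ)) := by
      rintro q ⟨⟨hqp, hqm⟩, hqgt⟩
      have hqgt' : p ^ m < q := by simpa using hqgt
      have hMq : M ∣ q + 1 := by
        have h0 : ((q + 1 : ℕ) : ZMod M) = 0 := by push_cast [hqm]; ring
        exact (ZMod.natCast_eq_zero_iff _ _).mp h0
      have hq0 : (q : ℤ) ≠ 0 := by exact_mod_cast hqp.ne_zero
      haveI : (Ideal.span {(q : ℤ)}).IsPrime := by
        rw [Ideal.span_singleton_prime hq0]
        exact Int.prime_iff_natAbs_prime.mpr (by simpa using hqp)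
      obtain ⟨Q, hQp, hQc⟩ :=
        Ideal.exists_ideal_over_prime_of_isIntegral_of_isDomain (S := O)
          (Ideal.span {(q : ℤ)}) (hker ▸ bot_le)
      have hqQ : ((q : ℕ) : O) ∈ Q := by
        have : (q : ℤ) ∈ Ideal.comap (algebraMap ℤ O) Q := by
          rw [hQc]; exact Ideal.mem_span_singleton_self _
        rw [Ideal.mem_comap, algebraMap_int_eq] at this
        simpa using this
      have hQbot : Q ≠ ⊥ := by
        intro h
        rw [h, Ideal.mem_bot] at hqQ
        exact hqp.ne_zero (by exact_mod_cast hqQ)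
      exact ⟨Q, hQbot, hQp, hqQ, chain_of_dvd hp hqp hk hMq hqgt' hQp hqQ⟩
    classical
    set f : ℕ → Ideal O := fun q => if h : q ∈ S then (hex q h).choose else ⊥ with hf
    have hfspec : ∀ q (h : q ∈ S), (f q) ≠ ⊥ ∧ (f q).IsPrime ∧ ((q : ℕ) : O) ∈ f q ∧
        IsPermutationChain k (f q) (fun i : Fin m => ((p : ℕ) : O) ^ (i : ℕ)) := by
      intro q h
      rw [hf]
      simp only [dif_pos h]
      exact (hex q h).choose_spec
    apply Set.infinite_of_injOn_mapsTo (f := f) (s := S) ?_ ?_ hinf2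
    · intro a ha b hb hab
      by_contra hne
      obtain ⟨_, hPa, haP, _⟩ := hfspec a ha
      obtain ⟨_, hPb, hbP, _⟩ := hfspec b hb
      rw [hab] at haP
      have hap : a.Prime := ha.1.1
      have hbp : b.Prime := hb.1.1
      have hnd : ¬ (b : ℤ) ∣ (a : ℤ) := by
        rw [Int.natCast_dvd_natCast]
        intro h
        exact hne ((Nat.prime_dvd_prime_iff_eq hbp hap).mp h).symm
      exact intCast_not_mem_of_not_dvd hPb.ne_top hbp hbP hnd (by simpa using haP)
    · intro q hq
      obtain ⟨h1, h2, _, h4⟩ := hfspec q hq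
      exact ⟨h1, h2, h4⟩
  exact ⟨⟨fun i : Fin m => ((2 : ℕ) : NumberField.RingOfIntegers K) ^ (i : ℕ),
    main 2 Nat.prime_two⟩, main⟩
end

section
/- Let K be a number field with ring of integers O_K, let k be a positive integer, and let E be a finite set of pairwise distinct nonzero elements of O_K. Then there exist infinitely many nonzero prime ideals P of O_K such that every element of E is a kth power residue modulo P and the elements of E are pairwise incongruent modulo P. -/
open Polynomial NumberField

theorem aux_poly_primes (f : Polynomial ℤ) (hf : 1 ≤ f.natDegree) :
    {p : ℕ | p.Prime ∧ ∃ n : ℤ, (p : ℤ) ∣ f.eval n}.Infinite := by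
  have hf0 : f ≠ 0 := fun h => by simp [h] at hf
  by_cases h0 : f.eval 0 = 0
  · exact Nat.infinite_setOf_prime.mono fun p hp => ⟨hp, 0, by rw [h0]; exact dvd_zero _⟩
  · -- unbounded
    refine Set.infinite_of_not_bddAbove ?_
    rintro ⟨B, hB⟩
    set c := f.eval 0 with hc
    set N : ℤ := (B.factorial : ℤ) with hN
    have hNpos : 0 < N := by positivity
    set m : ℤ := c * N with hm
    have hm0 : m ≠ 0 := mul_ne_zero h0 (by positivity)
    -- pick t with f.eval (m*t) ∉ {0, c, -c}
    have hfin : ({t : ℤ | f.eval (m * t) = 0} ∪ {t : ℤ | f.eval (m * t) = c}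
        ∪ {t : ℤ | f.eval (m * t) = -c}).Finite := by
      have key : ∀ v : ℤ, {t : ℤ | f.eval (m * t) = v}.Finite := by
        intro v
        have hg : (f.comp (C m * X) - C v) ≠ 0 := by
          intro h
          have hdeg : (f.comp (C m * X) - C v).natDegree = f.natDegree := by
            rw [natDegree_sub_C, natDegree_comp, natDegree_C_mul hm0, natDegree_X, mul_one]
          rw [h] at hdeg
          simp at hdeg; omega
        refine (finite_setOf_isRoot hg).subset ?_
        intro t ht
        simp only [Set.mem_setOf_eq] at ht ⊢
        simp [IsRoot, eval_comp, ht]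
      exact ((key 0).union (key c)).union (key (-c))
    obtain ⟨t, ht⟩ := (Set.infinite_univ.diff hfin).nonempty
    simp only [Set.mem_diff, Set.mem_union, Set.mem_setOf_eq, not_or] at ht
    obtain ⟨-, ⟨ht0, htc⟩, htnc⟩ := ht
    -- f.eval (m*t) = c * (1 + N * s)
    have hdvd : m * t ∣ f.eval (m * t) - c := by
      simpa using sub_dvd_eval_sub (m * t) 0 f
    obtain ⟨s, hs⟩ : ∃ s, f.eval (m * t) = c * (1 + N * s) := by
      obtain ⟨u, hu⟩ := hdvd
      exact ⟨t * u, by rw [hm] at hu; ring_nf; ring_nf at hu; linarith⟩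
    set u : ℤ := 1 + N * s with hu
    have hu1 : u.natAbs ≠ 1 := by
      intro h
      rcases Int.natAbs_eq_iff.mp h with h1 | h1
      · exact htc (by rw [hs, h1]; ring)
      · exact htnc (by rw [hs, h1]; ring)
    have hu0 : u ≠ 0 := fun h => ht0 (by rw [hs, h]; ring)
    set q := u.natAbs.minFac with hq
    have hqp : q.Prime := Nat.minFac_prime hu1
    have hqu : (q : ℤ) ∣ u := (Int.natCast_dvd_natCast.mpr (Nat.minFac_dvd _)).trans (Int.natAbs_dvd.mpr dvd_rfl)
    have hqmem : q ∈ {p : ℕ | p.Prime ∧ ∃ n : ℤ, (p : ℤ) ∣ f.eval n} :=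
      ⟨hqp, m * t, by rw [hs]; exact Dvd.dvd.mul_left hqu c⟩
    have hqB : q ≤ B := hB hqmem
    have : q ∣ B.factorial := Nat.dvd_factorial hqp.pos hqB
    have : (q : ℤ) ∣ 1 := by
      have h2 : (q : ℤ) ∣ N * s := Dvd.dvd.mul_right (Int.natCast_dvd_natCast.mpr this) s
      have := dvd_sub hqu h2
      simpa [hu] using this
    have h3 := Int.le_of_dvd one_pos this
    have h4 : (2:ℤ) ≤ q := by exact_mod_cast hqp.two_le
    omega

theorem aux_denom {L : Type*} [Field L] [Algebra ℚ L] (θ : L) (z : L)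
    (hz : z ∈ Algebra.adjoin ℚ ({θ} : Set L)) :
    ∃ d : ℤ, d ≠ 0 ∧ (d : L) * z ∈ Algebra.adjoin ℤ ({θ} : Set L) := by
  refine Algebra.adjoin_induction ?_ ?_ ?_ ?_ hz
  · intro x hx
    exact ⟨1, one_ne_zero, by simpa using Algebra.subset_adjoin hx⟩
  · intro q
    refine ⟨(q.den : ℤ), by exact_mod_cast q.den_ne_zero, ?_⟩
    have h1 : (q.den : ℚ) * q = (q.num : ℚ) := by
      exact Rat.den_mul_eq_num q
    have : ((q.den : ℤ) : L) * algebraMap ℚ L q = algebraMap ℤ L q.num := by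
      rw [algebraMap_int_eq, eq_intCast, ← map_intCast (algebraMap ℚ L) q.num, ← h1,
        map_mul, map_natCast]
      push_cast
      ring
    rw [this]
    exact Subalgebra.algebraMap_mem _ _
  · rintro x y - - ⟨a, ha, hax⟩ ⟨b, hb, hbx⟩
    refine ⟨a * b, mul_ne_zero ha hb, ?_⟩
    have : ((a * b : ℤ) : L) * (x + y) = (b : L) * ((a : L) * x) + (a : L) * ((b : L) * y) := by
      push_cast; ring
    rw [this]
    exact add_mem (mul_mem (Subalgebra.intCast_mem _ b) hax) (mul_mem (Subalgebra.intCast_mem _ a) hbx)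
  · rintro x y - - ⟨a, ha, hax⟩ ⟨b, hb, hbx⟩
    refine ⟨a * b, mul_ne_zero ha hb, ?_⟩
    have : ((a * b : ℤ) : L) * (x * y) = ((a : L) * x) * ((b : L) * y) := by push_cast; ring
    rw [this]
    exact mul_mem hax hbx

theorem aux_dvd_int {K : Type*} [Field K] [NumberField K] (z : 𝓞 K) (hz : z ≠ 0) :
    ∃ a : ℤ, a ≠ 0 ∧ z ∣ (a : 𝓞 K) := by
  have hint : IsIntegral ℤ z := IsIntegral.of_finite ℤ z
  set μ := minpoly ℤ z with hμ
  have hμ0 : μ ≠ 0 := minpoly.ne_zero hint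
  have hdeg : 0 < μ.natDegree := minpoly.natDegree_pos hint
  have key : (algebraMap ℤ (𝓞 K)) (μ.coeff 0) = -(z * aeval z μ.divX) := by
    have h : (aeval z) μ = 0 := minpoly.aeval ℤ z
    have h2 : μ = X * μ.divX + C (μ.coeff 0) := (X_mul_divX_add μ).symm
    rw [h2] at h
    simp only [map_add, aeval_mul, aeval_X, aeval_C] at h
    linear_combination h
  refine ⟨μ.coeff 0, ?_, ?_⟩
  · intro h
    have hdvd : z * aeval z μ.divX = 0 := by
      have := key
      rw [h] at this
      simpa using this.symm
    rcases mul_eq_zero.mp hdvd with h1 | h1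
    · exact hz h1
    · -- divX is monic of smaller degree, contradiction with minpoly.min
      have hmonic : μ.divX.Monic := by
        have h3 : μ.divX.natDegree = μ.natDegree - 1 := natDegree_divX_eq_natDegree_tsub_one
        have h4 : μ.divX.leadingCoeff = μ.leadingCoeff := by
          rw [leadingCoeff, leadingCoeff, h3, coeff_divX, Nat.sub_add_cancel hdeg]
        show μ.divX.leadingCoeff = 1
        rw [h4]
        exact minpoly.monic hint
      have := minpoly.min ℤ z hmonic h1
      have hlt : μ.divX.degree < μ.degree := degree_divX_lt hμ0
      rw [← hμ] at this
      exact absurd (lt_of_le_of_lt this hlt) (lt_irrefl _)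
  · refine ⟨-(aeval z μ.divX), ?_⟩
    have : (algebraMap ℤ (𝓞 K)) (μ.coeff 0) = ((μ.coeff 0 : ℤ) : 𝓞 K) := by
      simp [algebraMap_int_eq]
    rw [← this, key]
    ring

set_option maxHeartbeats 1000000 in
set_option synthInstance.maxHeartbeats 200000 in

theorem infinitely_many_primes_kth_power_residues_numberField (K : Type*) [Field K]
    [NumberField K] (k : ℕ) (hk : 0 < k) (E : Finset (𝓞 K)) (hE : (0 : 𝓞 K) ∉ E) :
    {P : Ideal (𝓞 K) | P ≠ ⊥ ∧ P.IsPrime ∧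
      (∀ c ∈ E, ∃ x : 𝓞 K, x ^ k - c ∈ P) ∧
      (∀ c ∈ E, ∀ c' ∈ E, c ≠ c' → c - c' ∉ P)}.Infinite := by
  classical
  set g : K[X] := ∏ c ∈ E, (X ^ k - C (algebraMap (𝓞 K) K c)) with hg
  set L := g.SplittingField with hL
  haveI hCZ : CharZero L := charZero_of_injective_algebraMap (algebraMap K L).injective
  haveI : FiniteDimensional ℚ L := FiniteDimensional.trans ℚ K L
  haveI : NumberField L := ⟨⟩
  -- roots of X^k - c in 𝓞 L
  have hroots : ∀ c ∈ E, ∃ y : 𝓞 L, (y : L) ^ k = algebraMap K L (algebraMap (𝓞 K) K c) := by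
    intro c hc
    have hsplit : Splits ((X ^ k - C (algebraMap (𝓞 K) K c)).map (algebraMap K L)) := by
      refine Splits.of_dvd (SplittingField.splits g) (Polynomial.map_ne_zero ?_) (Polynomial.map_dvd _ (Finset.dvd_prod_of_mem _ hc))
      rw [hg]
      refine Finset.prod_ne_zero_iff.mpr fun c' hc' h => ?_
      have := congrArg natDegree h
      rw [natDegree_X_pow_sub_C] at this
      simp at this; omega
    obtain ⟨y, hy⟩ := Splits.exists_eval_eq_zero hsplit (by
      rw [degree_map, degree_X_pow_sub_C hk]; simp; omega)
    rw [eval_map, eval₂_sub, eval₂_pow, eval₂_X, eval₂_C, sub_eq_zero] at hy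
    have hyint : IsIntegral ℤ y := by
      have hc_int : IsIntegral ℤ (algebraMap K L (algebraMap (𝓞 K) K c)) :=
        (c.2.algebraMap).map (IsScalarTower.toAlgHom ℤ K L)
      exact IsIntegral.of_pow hk (hy ▸ hc_int)
    exact ⟨⟨y, hyint⟩, hy⟩
  choose y hy using hroots
  -- primitive element
  obtain ⟨θ₀, hθ₀⟩ := Field.exists_primitive_element ℚ L
  obtain ⟨m, hm0, hmint⟩ := exists_integral_multiples ℤ ℚ ({θ₀} : Finset L)
  set θ : L := m • θ₀ with hθdef
  have hθint : IsIntegral ℤ θ := hmint θ₀ (Finset.mem_singleton_self _)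
  have htopθ : ∀ z : L, z ∈ Algebra.adjoin ℚ ({θ} : Set L) := by
    have h1 : (IntermediateField.adjoin ℚ {θ₀}).toSubalgebra = Algebra.adjoin ℚ {θ₀} :=
      IntermediateField.adjoin_simple_toSubalgebra_of_isAlgebraic (IsIntegral.of_finite ℚ θ₀).isAlgebraic
    have h2 : Algebra.adjoin ℚ ({θ₀} : Set L) ≤ Algebra.adjoin ℚ ({θ} : Set L) := by
      refine Algebra.adjoin_le ?_
      intro x hx
      rw [Set.mem_singleton_iff] at hx
      rw [hx]
      have : θ₀ = ((m : ℚ)⁻¹) • θ := by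
        rw [hθdef, ← Int.cast_smul_eq_zsmul ℚ m θ₀, smul_smul,
          inv_mul_cancel₀ (by exact_mod_cast hm0), one_smul]
      rw [this]
      exact Subalgebra.smul_mem _ (Algebra.subset_adjoin (Set.mem_singleton θ)) _
    intro z
    apply h2
    rw [← h1]
    have : z ∈ (⊤ : IntermediateField ℚ L) := trivial
    rw [← hθ₀] at this
    exact this
  -- denominator
  obtain ⟨T, hT⟩ := Module.Finite.fg_top (R := ℤ) (M := 𝓞 L)
  have hDfun : ∀ w : 𝓞 L, ∃ d : ℤ, d ≠ 0 ∧ (d : L) * w ∈ Algebra.adjoin ℤ ({θ} : Set L) :=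
    fun w => aux_denom θ w (htopθ _)
  choose D hD0 hDmem using hDfun
  set d : ℤ := ∏ w ∈ T, D w with hd
  have hdne : d ≠ 0 := Finset.prod_ne_zero_iff.mpr fun w _ => hD0 w
  have key : ∀ z : 𝓞 L, (d : L) * (z : L) ∈ Algebra.adjoin ℤ ({θ} : Set L) := by
    intro z
    have hz : z ∈ Submodule.span ℤ (T : Set (𝓞 L)) := by rw [hT]; trivial
    refine Submodule.span_induction ?_ ?_ ?_ ?_ hz
    · intro w hw
      obtain ⟨e, he⟩ := Finset.dvd_prod_of_mem D hw
      rw [← hd] at he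
      have : (d : L) * (w : L) = (e : L) * ((D w : L) * (w : L)) := by
        rw [he, Int.cast_mul]; ring
      rw [this]
      exact mul_mem (Subalgebra.intCast_mem _ e) (hDmem w)
    · simpa using zero_mem (Algebra.adjoin ℤ ({θ} : Set L))
    · intro x y _ _ hx hy
      have : (d : L) * ((x + y : 𝓞 L) : L) = (d : L) * (x : L) + (d : L) * (y : L) := by
        push_cast; ring
      rw [this]; exact add_mem hx hy
    · intro n x _ hx
      have : (d : L) * ((n • x : 𝓞 L) : L) = (n : L) * ((d : L) * (x : L)) := by
        push_cast [zsmul_eq_mul, map_intCast (algebraMap (𝓞 L) L)]; ring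
      rw [this]; exact mul_mem (Subalgebra.intCast_mem _ n) hx
  -- minimal polynomial of θ
  set f : ℤ[X] := minpoly ℤ θ with hf
  have hfdeg : 1 ≤ f.natDegree := minpoly.natDegree_pos hθint
  -- integers killed by differences
  have hpair : ∀ q : 𝓞 K × 𝓞 K, ∃ a : ℤ, a ≠ 0 ∧ (q.1 = q.2 ∨ (q.1 - q.2) ∣ (a : 𝓞 K)) := by
    intro q
    by_cases h : q.1 = q.2
    · exact ⟨1, one_ne_zero, Or.inl h⟩
    · obtain ⟨a, ha, hdv⟩ := aux_dvd_int (q.1 - q.2) (sub_ne_zero.mpr h)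
      exact ⟨a, ha, Or.inr hdv⟩
  choose a ha0 hadvd using hpair
  set A : ℤ := ∏ q ∈ E ×ˢ E, a q with hA
  have hAne : A ≠ 0 := Finset.prod_ne_zero_iff.mpr fun q _ => ha0 q
  set S : Set ℕ := {p : ℕ | p.Prime ∧ ¬ ((p : ℤ) ∣ d * A) ∧ ∃ n : ℤ, (p : ℤ) ∣ f.eval n}
    with hS
  have hSinf : S.Infinite := by
    have h1 := aux_poly_primes f hfdeg
    have h2 : {p : ℕ | (p : ℤ) ∣ d * A}.Finite := by
      have hdA : d * A ≠ 0 := mul_ne_zero hdne hAne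
      refine Set.Finite.subset (Set.finite_Icc 0 (d * A).natAbs) ?_
      intro p hp
      simp only [Set.mem_setOf_eq] at hp
      have h3 : p ∣ (d * A).natAbs := by
        have := Int.natAbs_dvd_natAbs.mpr hp
        simpa using this
      exact Set.mem_Icc.mpr ⟨Nat.zero_le _, Nat.le_of_dvd (Int.natAbs_pos.mpr hdA) h3⟩
    refine (h1.diff h2).mono ?_
    rintro p ⟨⟨hp1, hp2⟩, hp3⟩
    exact ⟨hp1, hp3, hp2⟩
  -- the per-prime construction
  have hcons : ∀ p ∈ S, ∃ P : Ideal (𝓞 K),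
      (P ≠ ⊥ ∧ P.IsPrime ∧ (∀ c ∈ E, ∃ x : 𝓞 K, x ^ k - c ∈ P) ∧
        (∀ c ∈ E, ∀ c' ∈ E, c ≠ c' → c - c' ∉ P)) ∧
      ((p : 𝓞 K) ∈ P) ∧ (∀ q : ℕ, q.Prime → (q : 𝓞 K) ∈ P → q = p) := by
    rintro p ⟨hpp, hpdA, n, hn⟩
    haveI : Fact p.Prime := ⟨hpp⟩
    have hroot : f.eval₂ (Int.castRingHom (ZMod p)) ((n : ZMod p)) = 0 := by
      have h0 : ((n : ZMod p)) = (Int.castRingHom (ZMod p)) n := rfl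
      rw [h0, eval₂_at_apply]
      exact_mod_cast (ZMod.intCast_zmod_eq_zero_iff_dvd _ p).mpr hn
    set e := minpoly.equivAdjoin hθint with he
    set φ₀ : (Algebra.adjoin ℤ ({θ} : Set L)) →+* ZMod p :=
      (AdjoinRoot.lift (Int.castRingHom (ZMod p)) _ hroot).comp e.symm.toAlgHom.toRingHom
      with hφ₀
    have hdp : ((d : ZMod p)) ≠ 0 := by
      intro h
      exact hpdA (((ZMod.intCast_zmod_eq_zero_iff_dvd _ p).mp h).mul_right A)
    set φ : 𝓞 L →+* ZMod p :=
      { toFun := fun z => φ₀ ⟨(d : L) * z, key z⟩ * ((d : ZMod p))⁻¹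
        map_one' := by
          have h1 : (⟨(d : L) * ((1 : 𝓞 L) : L), key 1⟩ :
              Algebra.adjoin ℤ ({θ} : Set L)) = ((d : ℤ) : Algebra.adjoin ℤ ({θ} : Set L)) := by
            ext
            push_cast [map_one (algebraMap (𝓞 L) L)]
            ring
          rw [h1, map_intCast]
          field_simp
        map_mul' := fun x y => by
          have h2 : ((d : ℤ) : Algebra.adjoin ℤ ({θ} : Set L)) *
              ⟨(d : L) * ((x * y : 𝓞 L) : L), key _⟩
              = ⟨(d : L) * (x : L), key x⟩ * ⟨(d : L) * (y : L), key y⟩ := by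
            ext
            push_cast [map_mul (algebraMap (𝓞 L) L)]
            ring
          have h3 := congrArg φ₀ h2
          rw [map_mul, map_mul, map_intCast] at h3
          have h4 : φ₀ ⟨(d : L) * ((x * y : 𝓞 L) : L), key _⟩
              = (φ₀ ⟨(d : L) * (x : L), key x⟩ * φ₀ ⟨(d : L) * (y : L), key y⟩)
                * ((d : ZMod p))⁻¹ := by
            rw [← h3, mul_comm ((d : ZMod p)) _, mul_assoc, mul_inv_cancel₀ hdp, mul_one]
          rw [h4]
          ring
        map_zero' := by
          have h1 : (⟨(d : L) * ((0 : 𝓞 L) : L), key 0⟩ :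
              Algebra.adjoin ℤ ({θ} : Set L)) = 0 := by
            ext
            push_cast [map_zero (algebraMap (𝓞 L) L)]
            ring
          rw [h1, φ₀.map_zero, zero_mul]
        map_add' := fun x y => by
          have h1 : (⟨(d : L) * ((x + y : 𝓞 L) : L), key _⟩ :
              Algebra.adjoin ℤ ({θ} : Set L))
              = ⟨(d : L) * (x : L), key x⟩ + ⟨(d : L) * (y : L), key y⟩ := by
            ext
            push_cast [map_add (algebraMap (𝓞 L) L)]
            ring
          rw [h1, φ₀.map_add, add_mul] }
      with hφ
    set ψ : 𝓞 K →+* ZMod p := φ.comp (algebraMap (𝓞 K) (𝓞 L)) with hψ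
    set P : Ideal (𝓞 K) := RingHom.ker ψ with hP
    have hPprime : P.IsPrime := RingHom.ker_isPrime ψ
    have hpmem : (p : 𝓞 K) ∈ P := by
      rw [hP, RingHom.mem_ker, map_natCast, ZMod.natCast_self]
    refine ⟨P, ⟨?_, hPprime, ?_, ?_⟩, hpmem, ?_⟩
    · intro hbot
      rw [hbot] at hpmem
      rw [Ideal.mem_bot] at hpmem
      exact (Nat.cast_ne_zero.mpr hpp.ne_zero) hpmem
    · intro c hc
      have hyc : algebraMap (𝓞 K) (𝓞 L) c = (y c hc) ^ k := by
        apply (IsFractionRing.injective (𝓞 L) L)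
        push_cast
        rw [hy c hc]
        rfl
      obtain ⟨x, hx⟩ := ZMod.ringHom_surjective ψ (φ (y c hc))
      refine ⟨x, ?_⟩
      rw [hP, RingHom.mem_ker, map_sub, map_pow, hx,
        show ψ c = φ (algebraMap (𝓞 K) (𝓞 L) c) from rfl, hyc, map_pow, sub_self]
    · intro c hc c' hc' hne hmem
      rw [hP, RingHom.mem_ker] at hmem
      have hdv : (c - c') ∣ ((a (c, c') : ℤ) : 𝓞 K) := (hadvd (c, c')).resolve_left hne
      obtain ⟨t, ht⟩ := hdv
      have : ((a (c, c') : ℤ) : ZMod p) = 0 := by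
        have := congrArg ψ ht
        rw [map_intCast, map_mul, hmem, zero_mul] at this
        exact this
      have hpa : (p : ℤ) ∣ a (c, c') := (ZMod.intCast_zmod_eq_zero_iff_dvd _ p).mp this
      have haA : a (c, c') ∣ A := Finset.dvd_prod_of_mem a (Finset.mem_product.mpr ⟨hc, hc'⟩)
      exact hpdA ((hpa.trans haA).mul_left d)
    · intro q hq hqmem
      rw [hP, RingHom.mem_ker, map_natCast] at hqmem
      have := (ZMod.natCast_eq_zero_iff q p).mp hqmem
      exact ((Nat.prime_dvd_prime_iff_eq hpp hq).mp this).symm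
  choose Pfun hPfun using hcons
  have hinj : Set.InjOn (fun p => if h : p ∈ S then Pfun p h else ⊥) S := by
    intro p hp q hq hpq
    simp only [dif_pos hp, dif_pos hq] at hpq
    have h1 : (q : 𝓞 K) ∈ Pfun p hp := by
      rw [hpq]
      exact (hPfun q hq).2.1
    exact ((hPfun p hp).2.2 q hq.1 h1).symm
  refine Set.Infinite.mono ?_ ((hSinf.image hinj))
  rintro _ ⟨p, hp, rfl⟩
  simp only [dif_pos hp]
  exact (hPfun p hp).1
end

section
/- Let k be a positive integer and let E be a finite set of pairwise distinct nonzero integers. Then there exist infinitely many prime numbers p such that every element of E is a kth power residue modulo p and the elements of E are pairwise incongruent modulo p. -/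
open Polynomial


lemma aux_exists_large_value (G : Polynomial ℤ) (hG : 0 < G.natDegree) (B : ℤ) :
    ∃ s : ℤ, B < |G.eval s| := by
  by_contra h
  push_neg at h
  have hsub : (Set.univ : Set ℤ) ⊆
      ⋃ v ∈ Finset.Icc (-B) B, {x | (G - C v).IsRoot x} := by
    intro s _
    have hb := abs_le.mp (h s)
    simp only [Set.mem_iUnion]
    exact ⟨G.eval s, by simp [Finset.mem_Icc, hb.1, hb.2], by simp [Polynomial.IsRoot]⟩
  have hfin : (Set.univ : Set ℤ).Finite := by
    refine Set.Finite.subset (Set.Finite.biUnion (Finset.finite_toSet _) fun v _ => ?_) hsub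
    refine Polynomial.finite_setOf_isRoot fun h0 => ?_
    have : G = C v := by linear_combination (norm := ring_nf) h0
    rw [this] at hG
    simp at hG
  exact Set.infinite_univ hfin

lemma aux_prime_dvd_eval (F : Polynomial ℤ) (hF : 0 < F.natDegree) (N : ℕ) :
    ∃ p : ℕ, p.Prime ∧ N < p ∧ ∃ n : ℤ, (p : ℤ) ∣ F.eval n := by
  set a := F.eval 0 with ha_def
  by_cases ha : a = 0
  · obtain ⟨p, hpN, hp⟩ := Nat.exists_infinite_primes (N + 1)
    have hroot : F.IsRoot 0 := ha
    obtain ⟨F1, hF1⟩ := Polynomial.dvd_iff_isRoot.mpr hroot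
    refine ⟨p, hp, by omega, p, ⟨F1.eval (p:ℤ), ?_⟩⟩
    rw [hF1]
    simp
  · set M : ℤ := a * (N.factorial : ℤ) with hM_def
    have hM : M ≠ 0 := by
      simp [hM_def, ha, Nat.factorial_ne_zero]
    set t : ℤ := a * M with ht_def
    have ht : t ≠ 0 := mul_ne_zero ha hM
    set G : Polynomial ℤ := F.comp (C t * X) with hG_def
    have hGdeg : 0 < G.natDegree := by
      rw [hG_def, Polynomial.natDegree_comp]
      have : (C t * X).natDegree = 1 := by
        rw [Polynomial.natDegree_C_mul ht, Polynomial.natDegree_X]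
      rw [this, mul_one]
      exact hF
    obtain ⟨s, hs⟩ := aux_exists_large_value G hGdeg |a|
    set v : ℤ := F.eval (t * s) with hv_def
    have hvG : G.eval s = v := by
      rw [hG_def, Polynomial.eval_comp]; simp [hv_def]
    rw [hvG] at hs
    have hdvd : t * s ∣ v - a := by
      have := Polynomial.sub_dvd_eval_sub (t * s) 0 F
      simpa [ha_def] using this
    obtain ⟨u, hu⟩ := hdvd
    have hv : v = a * (1 + M * s * u) := by
      have : v - a = t * s * u := hu
      rw [ht_def] at this
      linarith [this]  -- v = a + a*M*s*u = a*(1+M*s*u)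
    set w : ℤ := 1 + M * s * u with hw_def
    have hw2 : 1 < |w| := by
      rw [hv, abs_mul] at hs
      nlinarith [abs_nonneg w, abs_nonneg a, abs_pos.mpr ha]
    set p := w.natAbs.minFac with hp_def
    have hwnat : 1 < w.natAbs := by
      rwa [Int.abs_eq_natAbs, ← Nat.cast_one, Int.ofNat_lt] at hw2
    have hpp : p.Prime := Nat.minFac_prime (by omega)
    have hpw : (p : ℤ) ∣ w := by
      have h0 : (p:ℤ) ∣ (w.natAbs : ℤ) := Int.natCast_dvd_natCast.mpr (Nat.minFac_dvd _)
      rwa [Int.dvd_natAbs] at h0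
    have hNp : N < p := by
      by_contra hle
      push_neg at hle
      have h1 : (p:ℤ) ∣ (N.factorial : ℤ) :=
        Int.natCast_dvd_natCast.mpr (Nat.dvd_factorial hpp.pos hle)
      have h2 : (p:ℤ) ∣ M := hM_def ▸ Dvd.dvd.mul_left h1 a
      have h3 : (p:ℤ) ∣ 1 := by
        have h4 : (p:ℤ) ∣ M * s * u := Dvd.dvd.mul_right (Dvd.dvd.mul_right h2 s) u
        have h5 := dvd_sub hpw h4
        simpa [hw_def] using h5
      have h6 : (p:ℤ) ≤ 1 := Int.le_of_dvd one_pos h3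
      have := hpp.two_le
      omega
    refine ⟨p, hpp, hNp, t * s, dvd_trans hpw ?_⟩
    have hwv : w ∣ v := hv ▸ dvd_mul_left w a
    exact hwv


lemma aux_rat_data (k : ℕ) (hk : 0 < k) (E : Finset ℤ) :
    ∃ f : Polynomial ℚ, 0 < f.natDegree ∧ ∀ c ∈ E, ∃ g : Polynomial ℚ,
      f ∣ g ^ k - C (c : ℚ) := by
  set P : Polynomial ℚ := ∏ c ∈ E, (X ^ k - C (c : ℚ)) with hP
  have hPne : P ≠ 0 :=
    Finset.prod_ne_zero_iff.mpr fun c _ => X_pow_sub_C_ne_zero hk (c : ℚ)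
  obtain ⟨θ, hθ⟩ := Field.exists_primitive_element ℚ P.SplittingField
  have hint : IsIntegral ℚ θ := IsIntegral.of_finite ℚ θ
  refine ⟨minpoly ℚ θ, minpoly.natDegree_pos hint, ?_⟩
  intro c hc
  have hsp : ((X ^ k - C (c : ℚ)).map (algebraMap ℚ P.SplittingField)).Splits :=
    (SplittingField.splits P).of_dvd (Polynomial.map_ne_zero hPne)
      (Polynomial.map_dvd _ (Finset.dvd_prod_of_mem _ hc))
  have hdeg : (X ^ k - C (c : ℚ)).degree ≠ 0 := by
    rw [Polynomial.degree_X_pow_sub_C hk]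
    exact_mod_cast hk.ne'
  obtain ⟨α, hα⟩ := hsp.exists_eval_eq_zero (by rwa [Polynomial.degree_map])
  rw [Polynomial.eval_map] at hα
  have hαk : α ^ k = algebraMap ℚ P.SplittingField (c : ℚ) := by
    have := hα
    simp only [Polynomial.eval₂_sub, Polynomial.eval₂_pow, Polynomial.eval₂_X,
      Polynomial.eval₂_C, sub_eq_zero] at this
    exact this
  have h1 : α ∈ (IntermediateField.adjoin ℚ {θ}).toSubalgebra := by
    have : α ∈ IntermediateField.adjoin ℚ {θ} := hθ ▸ IntermediateField.mem_top
    exact this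
  rw [IntermediateField.adjoin_simple_toSubalgebra_of_isAlgebraic hint.isAlgebraic,
    Algebra.adjoin_singleton_eq_range_aeval] at h1
  obtain ⟨g, hg⟩ := h1
  have hg' : aeval θ g = α := hg
  refine ⟨g, minpoly.dvd ℚ θ ?_⟩
  rw [map_sub, map_pow, hg', hαk, Polynomial.aeval_C, sub_self]


lemma aux_int_scale (Pq : Polynomial ℚ) : ∃ (m : ℤ) (Pz : Polynomial ℤ), m ≠ 0 ∧
    Pz.map (Int.castRingHom ℚ) = C (m : ℚ) * Pq := by
  obtain ⟨b, hb⟩ := IsLocalization.integerNormalization_map_to_map (nonZeroDivisors ℤ) Pq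
  refine ⟨b, IsLocalization.integerNormalization (nonZeroDivisors ℤ) Pq,
    nonZeroDivisors.coe_ne_zero b, ?_⟩
  rw [show (Int.castRingHom ℚ) = algebraMap ℤ ℚ from rfl, hb]
  rw [← Int.cast_smul_eq_zsmul ℚ, Polynomial.smul_eq_C_mul]

lemma aux_int_data (k : ℕ) (hk : 0 < k) (E : Finset ℤ) :
    ∃ F : Polynomial ℤ, 0 < F.natDegree ∧ ∀ c ∈ E, ∃ (m w : ℤ) (G : Polynomial ℤ),
      m ≠ 0 ∧ w ≠ 0 ∧ ∀ n : ℤ, ∃ u : ℤ,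
        (G.eval n) ^ k * m = m * w ^ k * c + F.eval n * u := by
  obtain ⟨f, hfdeg, hf⟩ := aux_rat_data k hk E
  obtain ⟨mf, Fz, hmf, hFz⟩ := aux_int_scale f
  have hFdeg : 0 < Fz.natDegree := by
    have h1 : (Fz.map (Int.castRingHom ℚ)).natDegree = Fz.natDegree :=
      Polynomial.natDegree_map_eq_of_injective Int.cast_injective Fz
    rw [hFz, natDegree_C_mul (by exact_mod_cast hmf)] at h1
    omega
  refine ⟨Fz, hFdeg, ?_⟩
  intro c hc
  obtain ⟨g, q, hq⟩ := hf c hc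
  obtain ⟨mg, Gz, hmg, hGz⟩ := aux_int_scale g
  obtain ⟨mq, Qz, hmq, hQz⟩ := aux_int_scale q
  refine ⟨mf * mq, mg, Gz, mul_ne_zero hmf hmq, hmg, ?_⟩
  have hpoly : Gz ^ k * C (mf * mq) =
      C (mf * mq * mg ^ k * c) + Fz * (Qz * C (mg ^ k)) := by
    apply Polynomial.map_injective (Int.castRingHom ℚ) Int.cast_injective
    simp only [Polynomial.map_mul, Polynomial.map_pow, Polynomial.map_add, Polynomial.map_C]
    rw [hGz, hFz, hQz]
    simp only [Int.coe_castRingHom, Int.cast_mul, Int.cast_pow, map_mul, map_pow]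
    linear_combination (C (mf : ℚ) * C (mq : ℚ) * C (mg : ℚ) ^ k) * hq
  intro n
  refine ⟨Qz.eval n * mg ^ k, ?_⟩
  have h2 := congrArg (Polynomial.eval n) hpoly
  simp only [Polynomial.eval_mul, Polynomial.eval_pow, Polynomial.eval_add,
    Polynomial.eval_C] at h2
  linear_combination h2


theorem infinitely_many_primes_kth_power_residues_int (k : ℕ) (hk : 0 < k)
    (E : Finset ℤ) (hE : (0 : ℤ) ∉ E) :
    {p : ℕ | p.Prime ∧
      (∀ c ∈ E, ∃ x : ℤ, x ^ k ≡ c [ZMOD p]) ∧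
      (∀ c ∈ E, ∀ c' ∈ E, c ≠ c' → ¬ c ≡ c' [ZMOD p])}.Infinite := by
  obtain ⟨F, hFdeg, hdata⟩ := aux_int_data k hk E
  have hdata' : ∀ c : ℤ, ∃ (m w : ℤ) (G : Polynomial ℤ), m ≠ 0 ∧ w ≠ 0 ∧
      (c ∈ E → ∀ n : ℤ, ∃ u : ℤ, (G.eval n) ^ k * m = m * w ^ k * c + F.eval n * u) := by
    intro c
    by_cases hc : c ∈ E
    · obtain ⟨m, w, G, hm, hw, h⟩ := hdata c hc
      exact ⟨m, w, G, hm, hw, fun _ => h⟩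
    · exact ⟨1, 1, 0, one_ne_zero, one_ne_zero, fun h => absurd h hc⟩
  choose m w G hm hw hkey using hdata'
  apply Set.infinite_of_forall_exists_gt
  intro N
  set R : ℕ := N + (E.sum fun c => (m c).natAbs + (w c).natAbs)
      + (E.sum fun c => E.sum fun c' => (c - c').natAbs) with hR
  obtain ⟨p, hp, hpR, n, hpF⟩ := aux_prime_dvd_eval F hFdeg R
  haveI : Fact p.Prime := ⟨hp⟩
  have hnotdvd : ∀ z : ℤ, z ≠ 0 → z.natAbs ≤ R → ¬ (p : ℤ) ∣ z := by
    intro z hz hle hdvd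
    have h1 : (p : ℤ) ≤ |z| := Int.le_of_dvd (abs_pos.mpr hz) ((dvd_abs _ _).mpr hdvd)
    rw [Int.abs_eq_natAbs] at h1
    have h2 : p ≤ z.natAbs := by exact_mod_cast h1
    omega
  have hmw_le : ∀ c ∈ E, (m c).natAbs ≤ R ∧ (w c).natAbs ≤ R := by
    intro c hc
    have h1 : (m c).natAbs + (w c).natAbs ≤
        E.sum fun c => (m c).natAbs + (w c).natAbs :=
      Finset.single_le_sum (f := fun c => (m c).natAbs + (w c).natAbs)
        (fun _ _ => Nat.zero_le _) hc
    omega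
  have hF0 : ((F.eval n : ℤ) : ZMod p) = 0 :=
    (ZMod.intCast_zmod_eq_zero_iff_dvd _ _).mpr hpF
  refine ⟨p, ⟨hp, ?_, ?_⟩, by omega⟩
  · intro c hc
    obtain ⟨u, hu⟩ := hkey c hc n
    have hm0 : ((m c : ℤ) : ZMod p) ≠ 0 := fun h0 =>
      hnotdvd _ (hm c) (hmw_le c hc).1 ((ZMod.intCast_zmod_eq_zero_iff_dvd _ _).mp h0)
    have hw0 : ((w c : ℤ) : ZMod p) ≠ 0 := fun h0 =>
      hnotdvd _ (hw c) (hmw_le c hc).2 ((ZMod.intCast_zmod_eq_zero_iff_dvd _ _).mp h0)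
    set y : ZMod p := (((G c).eval n : ℤ) : ZMod p) with hy
    have hyk : ((m c : ℤ) : ZMod p) * y ^ k =
        ((m c : ℤ) : ZMod p) * (((w c : ℤ) : ZMod p) ^ k * ((c : ℤ) : ZMod p)) := by
      have h3 := congrArg (Int.cast : ℤ → ZMod p) hu
      push_cast at h3
      rw [hF0] at h3
      linear_combination h3
    have hyk2 : y ^ k = ((w c : ℤ) : ZMod p) ^ k * ((c : ℤ) : ZMod p) :=
      mul_left_cancel₀ hm0 hyk
    have hxk : (y * ((w c : ℤ) : ZMod p)⁻¹) ^ k = ((c : ℤ) : ZMod p) := by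
      rw [mul_pow, hyk2]
      rw [mul_right_comm, ← mul_pow, mul_inv_cancel₀ hw0, one_pow, one_mul]
    obtain ⟨x, hx⟩ := ZMod.intCast_surjective (y * ((w c : ℤ) : ZMod p)⁻¹)
    refine ⟨x, (ZMod.intCast_eq_intCast_iff _ _ _).mp ?_⟩
    push_cast
    rw [hx]
    exact hxk
  · intro c hc c' hc' hne hmod
    have hdvd : (p : ℤ) ∣ c' - c := Int.ModEq.dvd hmod
    have hle : (c' - c).natAbs ≤ R := by
      have h1 : (E.sum fun b => (c - b).natAbs) ≤
          E.sum fun a => E.sum fun c' => (a - c').natAbs :=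
        Finset.single_le_sum (f := fun a => E.sum fun c' => (a - c').natAbs)
          (fun _ _ => Nat.zero_le _) hc
      have h2 : (c - c').natAbs ≤ E.sum fun b => (c - b).natAbs :=
        Finset.single_le_sum (f := fun b => (c - b).natAbs)
          (fun _ _ => Nat.zero_le _) hc'
      have h3 : (c' - c).natAbs = (c - c').natAbs := by omega
      omega
    exact hnotdvd _ (sub_ne_zero.mpr (Ne.symm hne)) hle hdvd
end

section
/- Let F_q be a finite field, A = F_q[T], let k be a positive integer, and let E be a finite set of pairwise distinct nonzero polynomials in A. Then there exist infinitely many nonzero prime ideals P of A such that every element of E is a kth power residue modulo P and the elements of E are pairwise incongruent modulo P. -/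
open Polynomial IntermediateField

section Key
variable {Fq : Type*} [Field Fq] [Fintype Fq]

private lemma euclid_step
    (m : (Polynomial Fq)[X]) (hdeg : 0 < m.natDegree) (hmon : m.Monic)
    (ha0 : m.coeff 0 ≠ 0) (D : Polynomial Fq) (hD : D ≠ 0) :
    ∃ π h : Polynomial Fq, Prime π ∧ ¬ π ∣ D ∧ π ∣ m.eval h := by
  set a0 := m.coeff 0 with ha0def
  have hq : (m - C a0) ≠ 0 := by
    intro h
    have : m = C a0 := by linear_combination (norm := ring_nf) h
    rw [this, natDegree_C] at hdeg; exact lt_irrefl 0 hdeg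
  have hbad1 : Set.Finite {t : Polynomial Fq | m.eval (a0 * D * t) = a0} := by
    have hfin := finite_setOf_isRoot hq
    have hinj : Function.Injective (fun t : Polynomial Fq => a0 * D * t) := by
      intro x y hxy
      exact mul_left_cancel₀ (mul_ne_zero ha0 hD) hxy
    have : {t : Polynomial Fq | m.eval (a0 * D * t) = a0} ⊆ (fun t : Polynomial Fq => a0 * D * t) ⁻¹' {x | IsRoot (m - C a0) x} := by
      intro t ht
      simp only [Set.mem_preimage, Set.mem_setOf_eq, IsRoot, eval_sub, eval_C]
      rw [Set.mem_setOf_eq] at ht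
      rw [ht]; ring
    exact Set.Finite.subset (Set.Finite.preimage hinj.injOn hfin) this
  have hbad2 : Set.Finite {t : Polynomial Fq | t.natDegree = 0} := by
    have : {t : Polynomial Fq | t.natDegree = 0} ⊆ Set.range (C : Fq → Polynomial Fq) := by
      intro t ht
      rw [Set.mem_setOf_eq, natDegree_eq_zero] at ht
      obtain ⟨a, rfl⟩ := ht; exact Set.mem_range_self a
    exact Set.Finite.subset (Set.finite_range _) this
  obtain ⟨t, ht⟩ := Set.Finite.exists_notMem (hbad1.union hbad2)
  simp only [Set.mem_union, Set.mem_setOf_eq, not_or] at ht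
  obtain ⟨htv, htdeg⟩ := ht
  set h := a0 * D * t with hh
  have hdvd : h ∣ m.eval h - a0 := by
    have := sub_dvd_eval_sub h 0 m
    rw [sub_zero] at this
    rwa [← coeff_zero_eq_eval_zero m] at this
  obtain ⟨u, hu⟩ := hdvd
  have hune : u ≠ 0 := by
    intro h0; rw [h0, mul_zero, sub_eq_zero] at hu; exact htv hu
  set w := 1 + D * t * u with hw
  have hvw : m.eval h = a0 * w := by
    rw [hw]; ring_nf; rw [hh] at hu ⊢; linear_combination (norm := ring_nf) hu
  have hwdeg : 0 < w.natDegree := by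
    have h1 : (D * t * u) ≠ 0 := mul_ne_zero (mul_ne_zero hD (by
      intro h0; rw [h0] at htdeg; exact htdeg natDegree_zero)) hune
    have : w = D * t * u + C 1 := by rw [hw, map_one]; ring
    rw [this, natDegree_add_C]
    have ht1 : 0 < t.natDegree := Nat.pos_of_ne_zero htdeg
    have : t ∣ D * t * u := ⟨D * u, by ring⟩
    exact lt_of_lt_of_le ht1 (natDegree_le_of_dvd this h1)
  have hwne : w ≠ 0 := fun h0 => by rw [h0, natDegree_zero] at hwdeg; exact lt_irrefl 0 hwdeg
  have hwnu : ¬ IsUnit w := fun hu' => by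
    rw [natDegree_eq_zero_of_isUnit hu'] at hwdeg; exact lt_irrefl 0 hwdeg
  obtain ⟨π, hπirr, hπw⟩ := WfDvdMonoid.exists_irreducible_factor hwnu hwne
  refine ⟨π, h, (UniqueFactorizationMonoid.irreducible_iff_prime).mp hπirr, ?_, ?_⟩
  · intro hπD
    have : π ∣ 1 := by
      have h1 : π ∣ D * t * u := Dvd.dvd.mul_right (Dvd.dvd.mul_right hπD t) u
      have h2 : π ∣ w := hπw
      have := dvd_sub h2 h1
      rwa [hw, add_sub_cancel_right] at this
    exact hπirr.not_isUnit (isUnit_of_dvd_one this)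
  · rw [hvw]; exact Dvd.dvd.mul_left hπw a0

set_option maxHeartbeats 1000000 in
set_option synthInstance.maxHeartbeats 200000 in
lemma key (k : ℕ) (hk : 0 < k)
    (E : Finset (Polynomial Fq)) (hE : (0 : Polynomial Fq) ∉ E)
    (D0 : Polynomial Fq) (hD0 : D0 ≠ 0) :
    ∃ π : Polynomial Fq, Prime π ∧ ¬ π ∣ D0 ∧
      ∀ c ∈ E, ∃ x : Polynomial Fq, x ^ k - c ∈ Ideal.span ({π} : Set (Polynomial Fq)) := by
  classical
  set p := ringChar Fq with hpdef
  have hp : p.Prime := CharP.char_is_prime Fq p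
  haveI hpfact : Fact p.Prime := ⟨hp⟩
  set e := k.factorization p with hedef
  set k' := k / p ^ e with hk'def
  have hkfac : p ^ e * k' = k := Nat.ordProj_mul_ordCompl_eq_self k p
  have hk'0 : k' ≠ 0 := (Nat.ordCompl_pos p hk.ne').ne'
  have hpk' : ¬ p ∣ k' := Nat.not_dvd_ordCompl hp hk.ne'
  let F := FractionRing (Polynomial Fq)
  let Ω := AlgebraicClosure F
  haveI : CharP F p :=
    charP_of_injective_ringHom (RingHom.injective ((algebraMap (Polynomial Fq) F).comp C)) p
  have hinjAΩ : Function.Injective (algebraMap (Polynomial Fq) Ω) := by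
    rw [IsScalarTower.algebraMap_eq (Polynomial Fq) F Ω]
    exact (algebraMap F Ω).injective.comp (IsFractionRing.injective _ F)
  have hroot : ∀ c : Polynomial Fq, ∃ a : Ω, a ^ k' = algebraMap (Polynomial Fq) Ω c :=
    fun c => IsAlgClosed.exists_pow_nat_eq _ (Nat.pos_of_ne_zero hk'0)
  choose α hα using hroot
  have hint : ∀ c : Polynomial Fq, IsIntegral (Polynomial Fq) (α c) := fun c =>
    ⟨X ^ k' - C c, monic_X_pow_sub_C c hk'0, by simp [hα]⟩
  have hintF : ∀ c : Polynomial Fq, IsIntegral F (α c) := fun c => (hint c).tower_top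
  have hk'F : (k' : F) ≠ 0 := fun h => hpk' ((CharP.cast_eq_zero_iff F p k').mp h)
  have hsep : ∀ c ∈ E, IsSeparable F (α c) := by
    intro c hc
    have hcne : c ≠ 0 := fun h => hE (h ▸ hc)
    have hcF : algebraMap (Polynomial Fq) F c ≠ 0 :=
      fun h => hcne (IsFractionRing.injective (Polynomial Fq) F (h.trans (map_zero _).symm))
    have hdvd : minpoly F (α c) ∣ (X ^ k' - C (algebraMap (Polynomial Fq) F c)) := by
      apply minpoly.dvd
      rw [map_sub, map_pow, aeval_X, aeval_C, ← IsScalarTower.algebraMap_apply, hα, sub_self]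
    exact Polynomial.Separable.of_dvd (separable_X_pow_sub_C _ hk'F hcF) hdvd
  let S : Set Ω := α '' (E : Set (Polynomial Fq))
  haveI hfinS : Finite S := (E.finite_toSet.image α).to_subtype
  let K := IntermediateField.adjoin F S
  haveI : FiniteDimensional F K := IntermediateField.finiteDimensional_adjoin (by
    rintro x ⟨c, hc, rfl⟩; exact hintF c)
  haveI : Algebra.IsSeparable F K :=
    (IntermediateField.isSeparable_adjoin_iff_isSeparable F Ω).mpr (by
      rintro x ⟨c, hc, rfl⟩; exact hsep c hc)
  obtain ⟨θ₀, hθ₀⟩ := Field.exists_primitive_element F K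
  obtain ⟨θ₁, hθ₁top, hθ₁0⟩ : ∃ θ₁ : K, F⟮θ₁⟯ = ⊤ ∧ θ₁ ≠ 0 := by
    by_cases h0 : θ₀ = 0
    · refine ⟨1, ?_, one_ne_zero⟩
      rw [eq_top_iff, ← hθ₀, h0]
      exact adjoin_le_iff.mpr (Set.singleton_subset_iff.mpr (zero_mem _))
    · exact ⟨θ₀, hθ₀, h0⟩
  set θΩ : Ω := algebraMap K Ω θ₁ with hθΩdef
  have hθ₁int : IsIntegral F θ₁ := IsIntegral.of_finite F θ₁
  have hθΩalgF : IsAlgebraic F θΩ := (hθ₁int.map (IsScalarTower.toAlgHom F K Ω)).isAlgebraic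
  have hθΩalgA : IsAlgebraic (Polynomial Fq) θΩ :=
    (IsFractionRing.isAlgebraic_iff (Polynomial Fq) F Ω).mpr hθΩalgF
  obtain ⟨x0, d0, hd0, hx0⟩ : ∃ x0 : integralClosure (Polynomial Fq) Ω, ∃ d0 ≠ (0 : Polynomial Fq),
      algebraMap (Polynomial Fq) Ω d0 * θΩ = x0 := by
    obtain ⟨y, hy, hyint⟩ := hθΩalgA.exists_integral_multiple
    exact ⟨⟨_, hyint⟩, y, hy, (Algebra.smul_def y θΩ).symm⟩
  set θ : Ω := algebraMap (Polynomial Fq) Ω d0 * θΩ with hθdef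
  have hθint : IsIntegral (Polynomial Fq) θ := by
    have h2 := x0.2; rwa [← hx0] at h2
  have hθΩ0 : θΩ ≠ 0 := fun h =>
    hθ₁0 ((algebraMap K Ω).injective (h.trans (map_zero _).symm))
  have hd0Ω : algebraMap (Polynomial Fq) Ω d0 ≠ 0 := fun h =>
    hd0 (hinjAΩ (h.trans (map_zero _).symm))
  have hθ0 : θ ≠ 0 := mul_ne_zero hd0Ω hθΩ0
  set m := minpoly (Polynomial Fq) θ with hm
  have hmmonic : m.Monic := minpoly.monic hθint
  have hmdeg : 0 < m.natDegree := minpoly.natDegree_pos hθint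
  haveI : Module.IsTorsionFree (Polynomial Fq) Ω := by
    rw [Module.isTorsionFree_iff_algebraMap_injective]; exact hinjAΩ
  have hma0 : m.coeff 0 ≠ 0 := by
    have h1 : minpoly F θ = m.map (algebraMap (Polynomial Fq) F) :=
      minpoly.isIntegrallyClosed_eq_field_fractions' F hθint
    have h2 := minpoly.coeff_zero_ne_zero (hθint.tower_top (A := F)) hθ0
    rw [h1, coeff_map] at h2
    exact fun h => h2 (by rw [h, map_zero])
  have main : ∀ c ∈ E, ∃ d : Polynomial Fq, d ≠ 0 ∧ ∃ g : (Polynomial Fq)[X],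
      m ∣ (g ^ k' - C (d ^ k' * c)) := by
    intro c hc
    have hmem : α c ∈ K := IntermediateField.subset_adjoin F S (Set.mem_image_of_mem α hc)
    have hmem2 : (⟨α c, hmem⟩ : K) ∈ F⟮θ₁⟯.toSubalgebra := by
      rw [IntermediateField.mem_toSubalgebra, hθ₁top]; trivial
    rw [IntermediateField.adjoin_simple_toSubalgebra_of_isAlgebraic hθ₁int.isAlgebraic,
      Algebra.adjoin_singleton_eq_range_aeval, AlgHom.mem_range] at hmem2
    obtain ⟨G₀, hG₀⟩ := hmem2
    have hG₀Ω : aeval θΩ G₀ = α c := by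
      have h3 := congrArg (algebraMap K Ω) hG₀
      rwa [← Polynomial.aeval_algebraMap_apply] at h3
    set G₂ : F[X] := G₀.comp (Polynomial.C (algebraMap (Polynomial Fq) F d0)⁻¹ * X) with hG₂def
    have hd0F : algebraMap (Polynomial Fq) F d0 ≠ 0 := fun hh =>
      hd0 (IsFractionRing.injective (Polynomial Fq) F (hh.trans (map_zero _).symm))
    have hd0FΩ : algebraMap F Ω (algebraMap (Polynomial Fq) F d0) ≠ 0 := fun hh =>
      hd0F ((algebraMap F Ω).injective (hh.trans (map_zero _).symm))
    have harg : (algebraMap F Ω) ((algebraMap (Polynomial Fq) F d0)⁻¹) * θ = θΩ := by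
      rw [map_inv₀, hθdef, IsScalarTower.algebraMap_apply (Polynomial Fq) F Ω]
      exact inv_mul_cancel_left₀ hd0FΩ θΩ
    have hG₂ : aeval θ G₂ = α c := by
      rw [hG₂def, aeval_comp, map_mul, aeval_C, aeval_X, harg, hG₀Ω]
    obtain ⟨b, hb⟩ := IsLocalization.integerNormalization_map_to_map
      (nonZeroDivisors (Polynomial Fq)) G₂
    set g := IsLocalization.integerNormalization (nonZeroDivisors (Polynomial Fq)) G₂ with hgdef
    have hbne : (b : Polynomial Fq) ≠ 0 := nonZeroDivisors.coe_ne_zero b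
    have hgθ : aeval θ g = algebraMap (Polynomial Fq) Ω b * α c := by
      have h4 : aeval θ (g.map (algebraMap (Polynomial Fq) F)) =
          aeval θ ((b : Polynomial Fq) • G₂) := by rw [hb]
      rw [aeval_map_algebraMap] at h4
      rw [h4, ← algebraMap_smul F (b : Polynomial Fq) G₂, Polynomial.smul_eq_C_mul,
        map_mul, aeval_C, hG₂, ← IsScalarTower.algebraMap_apply]
    refine ⟨b, hbne, g, minpoly.isIntegrallyClosed_dvd hθint ?_⟩
    rw [map_sub, map_pow, aeval_C, hgθ, mul_pow, hα, map_mul, map_pow, sub_self]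
  choose! dd hdd gg hgg using main
  set D := D0 * ∏ c ∈ E, dd c with hD
  have hDne : D ≠ 0 := mul_ne_zero hD0 (Finset.prod_ne_zero_iff.mpr fun c hc => (hdd c hc))
  obtain ⟨π, h, hπ, hπD, hπeval⟩ := euclid_step m hmdeg hmmonic hma0 D hDne
  refine ⟨π, hπ, fun hdvd => hπD (hdvd.mul_right _), ?_⟩
  intro c hc
  haveI hmax : (Ideal.span ({π} : Set (Polynomial Fq))).IsMaximal :=
    PrincipalIdealRing.isMaximal_of_irreducible hπ.irreducible
  haveI hprime : (Ideal.span ({π} : Set (Polynomial Fq))).IsPrime := hmax.isPrime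
  have hfield : IsField (Polynomial Fq ⧸ Ideal.span ({π} : Set (Polynomial Fq))) :=
    (Ideal.Quotient.maximal_ideal_iff_isField_quotient _).mp hmax
  haveI : Finite (Polynomial Fq ⧸ Ideal.span ({π} : Set (Polynomial Fq))) := by
    have hM : Module.Finite Fq (AdjoinRoot π) :=
      Module.Finite.of_basis (AdjoinRoot.powerBasis hπ.ne_zero).basis
    exact Module.finite_of_finite Fq (M := AdjoinRoot π)
  haveI : CharP (Polynomial Fq ⧸ Ideal.span ({π} : Set (Polynomial Fq))) p :=
    charP_of_injective_ringHom
      (RingHom.injective ((Ideal.Quotient.mk (Ideal.span ({π} : Set (Polynomial Fq)))).comp C)) p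
  set Q := Ideal.Quotient.mk (Ideal.span ({π} : Set (Polynomial Fq))) with hQdef
  have hQm : aeval (Q h) m = 0 := by
    have h5 : aeval (Q h) m = Q (m.eval h) := by
      rw [aeval_def, hQdef, ← Ideal.Quotient.algebraMap_eq, Polynomial.eval₂_at_apply]
    rw [h5, Ideal.Quotient.eq_zero_iff_mem]
    exact Ideal.mem_span_singleton.mpr hπeval
  obtain ⟨w, hwq⟩ := hgg c hc
  have hkey : (aeval (Q h) (gg c)) ^ k' = (Q (dd c)) ^ k' * Q c := by
    have h6 := congrArg (aeval (Q h)) hwq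
    simp only [map_sub, map_mul, map_pow, aeval_C] at h6
    rw [hQm, zero_mul, sub_eq_zero, Ideal.Quotient.algebraMap_eq, ← hQdef] at h6
    exact h6
  have hdne : Q (dd c) ≠ 0 := by
    rw [hQdef, Ne, Ideal.Quotient.eq_zero_iff_mem, Ideal.mem_span_singleton]
    intro hdvd
    exact hπD (hdvd.trans ((Finset.dvd_prod_of_mem dd hc).mul_left D0))
  obtain ⟨yinv, hyinv⟩ := hfield.mul_inv_cancel hdne
  set y := aeval (Q h) (gg c) * yinv with hydef
  have hy : y ^ k' = Q c := by
    have h10 : (Q (dd c) * yinv) ^ k' = 1 := by rw [hyinv, one_pow]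
    calc y ^ k' = (aeval (Q h) (gg c)) ^ k' * yinv ^ k' := mul_pow _ _ _
      _ = (Q (dd c)) ^ k' * Q c * yinv ^ k' := by rw [hkey]
      _ = Q c * ((Q (dd c) * yinv) ^ k') := by rw [mul_pow]; ring
      _ = Q c := by rw [h10, mul_one]
  obtain ⟨z, hz⟩ : ∃ z, z ^ (p ^ e) = y := by
    refine Finite.injective_iff_surjective.mp ?_ y
    intro a b hab
    simp only at hab
    have h8 : (a - b) ^ (p ^ e) = 0 := by rw [sub_pow_char_pow, hab, sub_self]
    exact sub_eq_zero.mp ((pow_eq_zero_iff (pow_pos hp.pos e).ne').mp h8)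
  have hzk : z ^ k = Q c := by
    rw [← hkfac, pow_mul, hz, hy]
  obtain ⟨x, hx⟩ := Ideal.Quotient.mk_surjective z
  refine ⟨x, ?_⟩
  rw [← Ideal.Quotient.eq_zero_iff_mem, map_sub, map_pow]
  rw [← hQdef] at hx ⊢
  rw [hx, hzk, sub_self]
end Key



theorem infinitely_many_primes_kth_power_residues_polynomial (Fq : Type*) [Field Fq]
    [Fintype Fq] (k : ℕ) (hk : 0 < k) (E : Finset (Polynomial Fq))
    (hE : (0 : Polynomial Fq) ∉ E) :
    {P : Ideal (Polynomial Fq) | P ≠ ⊥ ∧ P.IsPrime ∧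
      (∀ c ∈ E, ∃ x : Polynomial Fq, x ^ k - c ∈ P) ∧
      (∀ c ∈ E, ∀ c' ∈ E, c ≠ c' → c - c' ∉ P)}.Infinite := by
  classical
  by_contra hinf
  rw [Set.not_infinite] at hinf
  set DE := ∏ c ∈ E, ∏ c' ∈ E, (if c = c' then 1 else c - c') with hDE
  have hDEne : DE ≠ 0 := Finset.prod_ne_zero_iff.mpr (fun c hc =>
    Finset.prod_ne_zero_iff.mpr (fun c' hc' => by
      split
      · exact one_ne_zero
      · exact sub_ne_zero.mpr (by assumption)))
  choose gen hgen using fun P : Ideal (Polynomial Fq) => (IsPrincipalIdealRing.principal P).principal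
  set D0 := DE * ∏ P ∈ hinf.toFinset, gen P with hD0def
  have hD0 : D0 ≠ 0 := by
    refine mul_ne_zero hDEne (Finset.prod_ne_zero_iff.mpr (fun P hP => ?_))
    intro h0
    have hPS := hinf.mem_toFinset.mp hP
    have : P = ⊥ := by rw [hgen P, h0, Submodule.span_zero_singleton]
    exact hPS.1 this
  obtain ⟨π, hπ, hπD0, hres⟩ := key k hk E hE D0 hD0
  have hPmem : Ideal.span ({π} : Set (Polynomial Fq)) ∈
      {P : Ideal (Polynomial Fq) | P ≠ ⊥ ∧ P.IsPrime ∧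
        (∀ c ∈ E, ∃ x : Polynomial Fq, x ^ k - c ∈ P) ∧
        (∀ c ∈ E, ∀ c' ∈ E, c ≠ c' → c - c' ∉ P)} := by
    refine ⟨?_, (Ideal.span_singleton_prime hπ.ne_zero).mpr hπ, hres, ?_⟩
    · rw [Ne, Ideal.span_singleton_eq_bot]; exact hπ.ne_zero
    · intro c hc c' hc' hne hmem
      rw [Ideal.mem_span_singleton] at hmem
      have h1 : (c - c') ∣ DE := by
        have h2 : (if c = c' then 1 else c - c') ∣ ∏ c'' ∈ E, (if c = c'' then 1 else c - c'') :=
          Finset.dvd_prod_of_mem _ hc'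
        rw [if_neg hne] at h2
        exact h2.trans (Finset.dvd_prod_of_mem (fun c => ∏ c' ∈ E, (if c = c' then 1 else c - c')) hc)
      exact hπD0 ((hmem.trans h1).trans (dvd_mul_right DE _))
  have hPfin : Ideal.span ({π} : Set (Polynomial Fq)) ∈ hinf.toFinset :=
    hinf.mem_toFinset.mpr hPmem
  have h3 : gen (Ideal.span ({π} : Set (Polynomial Fq))) ∣ ∏ P ∈ hinf.toFinset, gen P :=
    Finset.dvd_prod_of_mem gen hPfin
  have h4 : π ∣ gen (Ideal.span ({π} : Set (Polynomial Fq))) := by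
    have h5 := hgen (Ideal.span ({π} : Set (Polynomial Fq)))
    rw [Ideal.submodule_span_eq] at h5
    exact (Ideal.span_singleton_eq_span_singleton.mp h5).dvd
  exact hπD0 ((h4.trans h3).mul_left DE)
end
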